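/- arXiv:2108.06934 — 6 statements merged into one kernel-verified Lean document; each statement's English description precedes it below -/
import Mathlib

section
/- For I = \{0\}, J = \{1\} (so q = 2) and k \ge 3, the number r(n) of binary words of length n starting with 0, ending with 1, containing no k consecutive 0s and no k consecutive 1s, satisfies for all n \ge 2: r(n) = \sum_{j=1}^{k-1} r(n-j) + d(n), where d(n) = 1 if n \equiv 0 (mod k), d(n) = -1 if n \equiv 1 (mod k), and d(n) = 0 otherwise, with conventions r(0)=1 and r(m)=0 for m<0 and r(1)=0. -/
open List

namespace Stmt14Aux

lemma infix_append_cases {α : Type*} {u a b : List α} (h : u <:+: a ++ b) :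
    u <:+: a ∨ u <:+: b ∨
      ∃ u1 u2, u = u1 ++ u2 ∧ u1 ≠ [] ∧ u1 <:+ a ∧ u2 <+: b := by
  obtain ⟨s, t, hst⟩ := h
  rcases le_or_gt (s.length + u.length) a.length with hle | hgt
  · left
    have h1 := congrArg (take a.length) hst
    rw [take_append, take_append, List.take_left,
      take_of_length_le (by omega : s.length ≤ a.length),
      take_of_length_le (by omega : u.length ≤ a.length - s.length)] at h1
    exact ⟨s, _, h1⟩
  rcases le_or_gt a.length s.length with hle2 | hgt2
  · right; left
    have h1 := congrArg (drop a.length) hst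
    rw [drop_append, drop_append, List.drop_left,
      Nat.sub_eq_zero_of_le hle2, drop_zero] at h1
    simp only [length_append] at h1
    rw [(show a.length - (s.length + u.length) = 0 by omega), drop_zero] at h1
    exact ⟨drop a.length s, t, h1⟩
  · right; right
    refine ⟨take (a.length - s.length) u, drop (a.length - s.length) u,
      (take_append_drop _ _).symm, ?_, ⟨s, ?_⟩, ⟨t, ?_⟩⟩
    · simp only [ne_eq, ← length_eq_zero_iff, length_take]
      omega
    · have h1 := congrArg (take a.length) hst
      rw [take_append, take_append, List.take_left,
        take_of_length_le (le_of_lt hgt2)] at h1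
      simp only [length_append] at h1
      rw [(show a.length - (s.length + u.length) = 0 by omega), take_zero,
        append_nil] at h1
      exact h1
    · have h1 := congrArg (drop a.length) hst
      rw [drop_append, drop_append, List.drop_left,
        drop_eq_nil_of_le (le_of_lt hgt2)] at h1
      simp only [length_append] at h1
      rw [(show a.length - (s.length + u.length) = 0 by omega), drop_zero,
        nil_append] at h1
      exact h1

lemma one_ne_zero' : (1 : Fin 2) ≠ 0 := by decide

lemma fin2_eq_one {x : Fin 2} (h : x ≠ 0) : x = 1 := by omega

lemma infix_rep {k j : ℕ} {c d : Fin 2} {v : List (Fin 2)} (hj : j < k)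
    (hv : v.head? ≠ some c) (h : replicate k d <:+: replicate j c ++ v) :
    replicate k d <:+: v := by
  rcases infix_append_cases h with h1 | h1 | ⟨u1, u2, hu, hne, hsuf, hpre⟩
  · have := h1.length_le
    simp only [length_replicate] at this
    omega
  · exact h1
  · obtain ⟨x, hx⟩ := exists_mem_of_ne_nil u1 hne
    have hxd : x = d := eq_of_mem_replicate (by rw [hu]; exact mem_append_left _ hx)
    have hxc : x = c := eq_of_mem_replicate (hsuf.sublist.subset hx)
    cases u2 with
    | nil =>
      rw [append_nil] at hu
      have := hsuf.length_le
      rw [← hu, length_replicate, length_replicate] at this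
      omega
    | cons y ys =>
      exfalso
      obtain ⟨t2, ht2⟩ := hpre
      have hyd : y = d := eq_of_mem_replicate
        (by rw [hu]; exact mem_append_right _ mem_cons_self)
      apply hv
      rw [← ht2, cons_append, head?_cons, hyd, hxd.symm, hxc]

def NR (k : ℕ) (w : List (Fin 2)) : Prop :=
  ¬ replicate k (0 : Fin 2) <:+: w ∧ ¬ replicate k (1 : Fin 2) <:+: w

lemma NR_append {k j : ℕ} {c : Fin 2} {v : List (Fin 2)} (hj : j < k)
    (hv : v.head? ≠ some c) : NR k (replicate j c ++ v) ↔ NR k v := by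
  constructor
  · rintro ⟨h0, h1⟩
    exact ⟨fun h => h0 (h.trans (suffix_append _ _).isInfix),
      fun h => h1 (h.trans (suffix_append _ _).isInfix)⟩
  · rintro ⟨h0, h1⟩
    exact ⟨fun h => h0 (infix_rep hj hv h), fun h => h1 (infix_rep hj hv h)⟩

def WS (k m : ℕ) (a b : Fin 2) : Set (List (Fin 2)) :=
  {w | w.length = m ∧ w.head? = some a ∧ w.getLast? = some b ∧ NR k w}

lemma WS_finite (k m : ℕ) (a b : Fin 2) : (WS k m a b).Finite :=
  (List.finite_length_eq (Fin 2) m).subset fun _ hw => hw.1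

def rl (w : List (Fin 2)) : ℕ := (w.takeWhile (· == (0 : Fin 2))).length

def tl (w : List (Fin 2)) : List (Fin 2) := w.dropWhile (· == (0 : Fin 2))

lemma take_eq_rep (w : List (Fin 2)) :
    w.takeWhile (· == (0 : Fin 2)) = replicate (rl w) 0 :=
  eq_replicate_iff.mpr ⟨rfl, fun _ hb => by simpa using mem_takeWhile_imp hb⟩

lemma decomp (w : List (Fin 2)) : replicate (rl w) 0 ++ tl w = w := by
  rw [← take_eq_rep]; exact takeWhile_append_dropWhile

lemma rl_append {j : ℕ} {v : List (Fin 2)} (hv : v.head? ≠ some 0) :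
    rl (replicate j 0 ++ v) = j ∧ tl (replicate j 0 ++ v) = v := by
  have htw : takeWhile (· == (0 : Fin 2)) v = [] := by
    cases v with
    | nil => simp
    | cons x xs =>
      simp only [head?_cons, ne_eq, Option.some.injEq] at hv
      simp [takeWhile_cons, hv]
  have hdw : dropWhile (· == (0 : Fin 2)) v = v := by
    have := takeWhile_append_dropWhile (p := (· == (0 : Fin 2))) (l := v)
    rw [htw, nil_append] at this; exact this
  have hrep : takeWhile (· == (0 : Fin 2)) (replicate j (0 : Fin 2)) = replicate j 0 := by
    rw [takeWhile_replicate]; simp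
  constructor
  · unfold rl
    rw [takeWhile_append, hrep]
    simp [htw]
  · unfold tl
    rw [dropWhile_append]
    simp [hdw, hrep, dropWhile_replicate]
lemma head?_tl {w : List (Fin 2)} (h : tl w ≠ []) : (tl w).head? = some 1 := by
  have h2 := head?_dropWhile_not (· == (0 : Fin 2)) w
  unfold tl at *
  cases hd : (dropWhile (· == (0 : Fin 2)) w).head? with
  | none => rw [head?_eq_none_iff] at hd; exact absurd hd h
  | some x =>
    rw [hd] at h2
    simp only [beq_eq_false_iff_ne, ne_eq] at h2
    rw [fin2_eq_one h2]

lemma rl_pos {w : List (Fin 2)} (h : w.head? = some 0) : 1 ≤ rl w := by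
  cases w with
  | nil => simp at h
  | cons x xs =>
    simp only [head?_cons, Option.some.injEq] at h
    unfold rl
    rw [takeWhile_cons]
    simp [h]

lemma rl_le (w : List (Fin 2)) : rl w ≤ w.length :=
  (takeWhile_sublist _).length_le

lemma rl_lt {k : ℕ} {w : List (Fin 2)} (hnr : NR k w) : rl w < k := by
  by_contra hc
  push_neg at hc
  apply hnr.1
  have h1 : replicate k (0 : Fin 2) <+: replicate (rl w) 0 :=
    ⟨replicate (rl w - k) 0, by rw [← replicate_add]; congr 1; omega⟩
  have h2 : replicate (rl w) (0 : Fin 2) <+: w := by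
    rw [← take_eq_rep]; exact takeWhile_prefix _
  exact (h1.trans h2).isInfix

lemma image_tl (k m j : ℕ) (b : Fin 2) (hj1 : 1 ≤ j) (hjk : j < k) :
    tl '' {w | w ∈ WS k m 0 b ∧ rl w = j ∧ tl w ≠ []} = WS k (m - j) 1 b := by
  ext v
  constructor
  · rintro ⟨w, ⟨⟨hlen, hhd, hlast, hnr⟩, hrl, htl⟩, rfl⟩
    have hw : replicate j (0 : Fin 2) ++ tl w = w := by rw [← hrl]; exact decomp w
    have hhd' : (tl w).head? = some 1 := head?_tl htl
    have hlen' : (tl w).length = m - j := by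
      have := congrArg length hw
      simp only [length_append, length_replicate] at this
      omega
    refine ⟨hlen', hhd', ?_, ?_⟩
    · rw [← hw, getLast?_append] at hlast
      cases hl : (tl w).getLast? with
      | none => rw [getLast?_eq_none_iff] at hl; exact absurd hl htl
      | some y => rw [hl] at hlast; simpa using hlast
    · rw [← hw] at hnr
      exact (NR_append hjk (by rw [hhd']; simp [one_ne_zero'])).mp hnr
  · rintro ⟨hlen, hhd, hlast, hnr⟩
    have hvne : v ≠ [] := by
      intro hv; rw [hv] at hhd; simp at hhd
    have hmv : 1 ≤ m - j := by
      rw [← hlen]; exact length_pos_iff.mpr hvne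
    have hv0 : v.head? ≠ some 0 := by rw [hhd]; simp [one_ne_zero']
    obtain ⟨hrl, htl⟩ := rl_append (j := j) hv0
    refine ⟨replicate j 0 ++ v, ⟨⟨?_, ?_, ?_, ?_⟩, hrl, by rw [htl]; exact hvne⟩, htl⟩
    · simp only [length_append, length_replicate, hlen]; omega
    · rw [head?_append]
      cases j with
      | zero => omega
      | succ i => simp [replicate_succ]
    · rw [getLast?_append, hlast]; simp
    · exact (NR_append hjk hv0).mpr hnr

lemma injOn_tl (k m j : ℕ) (b : Fin 2) :
    Set.InjOn tl {w | w ∈ WS k m 0 b ∧ rl w = j ∧ tl w ≠ []} := by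
  rintro w ⟨_, hw, _⟩ w' ⟨_, hw', _⟩ h
  rw [← decomp w, ← decomp w', hw, hw', h]
lemma cover1 (k m : ℕ) (hk : 1 ≤ k) :
    WS k m 0 1 = ⋃ j ∈ Finset.Icc 1 (k - 1),
      {w | w ∈ WS k m 0 1 ∧ rl w = j ∧ tl w ≠ []} := by
  ext w
  simp only [Set.mem_iUnion, Set.mem_setOf_eq, Finset.mem_Icc, exists_prop]
  constructor
  · intro hw
    obtain ⟨hlen, hhd, hlast, hnr⟩ := hw
    have h1 := rl_pos hhd
    have h2 := rl_lt hnr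
    have h3 : tl w ≠ [] := by
      intro htl
      have hw2 := decomp w
      rw [htl, append_nil] at hw2
      have := mem_of_getLast? hlast
      rw [← hw2] at this
      exact one_ne_zero' (eq_of_mem_replicate this)
    exact ⟨rl w, ⟨h1, by omega⟩, ⟨hlen, hhd, hlast, hnr⟩, rfl, h3⟩
  · rintro ⟨j, _, hw, _⟩
    exact hw

lemma cover0 (k m : ℕ) (hk : 1 ≤ k) :
    WS k m 0 0 = {w | w ∈ WS k m 0 0 ∧ tl w = []} ∪ ⋃ j ∈ Finset.Icc 1 (k - 1),
      {w | w ∈ WS k m 0 0 ∧ rl w = j ∧ tl w ≠ []} := by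
  ext w
  simp only [Set.mem_union, Set.mem_iUnion, Set.mem_setOf_eq, Finset.mem_Icc, exists_prop]
  constructor
  · intro hw
    by_cases htl : tl w = []
    · exact Or.inl ⟨hw, htl⟩
    · exact Or.inr ⟨rl w, ⟨rl_pos hw.2.1, by have := rl_lt hw.2.2.2; omega⟩, hw, rfl, htl⟩
  · rintro (⟨hw, _⟩ | ⟨j, _, hw, _⟩) <;> exact hw

lemma E_eq (k m : ℕ) (hk : 3 ≤ k) (hm : 1 ≤ m) :
    {w | w ∈ WS k m 0 0 ∧ tl w = []} =
      if m ≤ k - 1 then {replicate m (0 : Fin 2)} else ∅ := by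
  ext w
  simp only [Set.mem_setOf_eq]
  constructor
  · rintro ⟨⟨hlen, hhd, hlast, hnr⟩, htl⟩
    have hw2' := decomp w
    rw [htl, append_nil] at hw2'
    have hw2 : w = replicate (rl w) 0 := hw2'.symm
    have hrlm : rl w = m := by
      have := congrArg length hw2
      rw [hlen, length_replicate] at this
      omega
    have hmk : m < k := by rw [← hrlm]; exact rl_lt hnr
    rw [if_pos (by omega)]
    rw [hw2, hrlm]
    rfl
  · intro hw
    by_cases hmk : m ≤ k - 1
    · rw [if_pos hmk] at hw
      rw [Set.mem_singleton_iff] at hw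
      subst hw
      have hne : replicate m (0 : Fin 2) ≠ [] := by
        simp [← length_eq_zero_iff]; omega
      refine ⟨⟨length_replicate, ?_, ?_, ?_, ?_⟩, ?_⟩
      · cases m with
        | zero => omega
        | succ i => simp [replicate_succ]
      · rw [getLast?_replicate]; simp; omega
      · intro h
        have := h.length_le
        simp only [length_replicate] at this
        omega
      · intro h
        have : (1 : Fin 2) ∈ replicate m (0 : Fin 2) :=
          h.sublist.subset (mem_replicate.mpr ⟨by omega, rfl⟩)
        exact one_ne_zero' (eq_of_mem_replicate this)
      · have := (rl_append (j := m) (v := ([] : List (Fin 2))) (by simp)).2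
        rwa [append_nil] at this
    · rw [if_neg hmk] at hw
      exact absurd hw (Set.notMem_empty _)

def fl : Fin 2 → Fin 2 := fun x => 1 - x

lemma fl_invol : ∀ x : Fin 2, fl (fl x) = x := by decide

lemma fl_inj : Function.Injective fl := fun x y h => by
  rw [← fl_invol x, ← fl_invol y, h]

lemma map_fl_map_fl (w : List (Fin 2)) : map fl (map fl w) = w := by
  rw [map_map]
  have : fl ∘ fl = id := funext fl_invol
  rw [this, map_id]

lemma NR_map {k : ℕ} (w : List (Fin 2)) : NR k (map fl w) ↔ NR k w := by
  have key : ∀ (d : Fin 2) (u : List (Fin 2)), replicate k d <:+: u →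
      replicate k (fl d) <:+: map fl u := fun d u h => by
    simpa [map_replicate] using h.map fl
  constructor
  · rintro ⟨h0, h1⟩
    constructor
    · exact fun h => h1 (by simpa [(by decide : fl 0 = 1)] using key 0 w h)
    · exact fun h => h0 (by simpa [(by decide : fl 1 = 0)] using key 1 w h)
  · rintro ⟨h0, h1⟩
    constructor
    · intro h
      have h2 := key 0 _ h
      rw [map_fl_map_fl, (by decide : fl 0 = 1)] at h2
      exact h1 h2
    · intro h
      have h2 := key 1 _ h
      rw [map_fl_map_fl, (by decide : fl 1 = 0)] at h2
      exact h0 h2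

lemma WS_flip (k m : ℕ) (a b : Fin 2) : map fl '' WS k m a b = WS k m (fl a) (fl b) := by
  ext w
  constructor
  · rintro ⟨v, ⟨hlen, hhd, hlast, hnr⟩, rfl⟩
    refine ⟨by simp [hlen], ?_, ?_, (NR_map v).mpr hnr⟩
    · rw [head?_map, hhd]; rfl
    · rw [getLast?_map, hlast]; rfl
  · rintro ⟨hlen, hhd, hlast, hnr⟩
    refine ⟨map fl w, ⟨by simp [hlen], ?_, ?_, (NR_map w).mpr hnr⟩, map_fl_map_fl w⟩
    · rw [head?_map, hhd]; simp [fl_invol]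
    · rw [getLast?_map, hlast]; simp [fl_invol]

lemma ncard_flip (k m : ℕ) (a b : Fin 2) :
    (WS k m a b).ncard = (WS k m (fl a) (fl b)).ncard := by
  rw [← WS_flip, Set.ncard_image_of_injective _ (map_injective_iff.mpr fl_inj)]
lemma ncard_biUnion {ι α : Type*} [DecidableEq ι] {s : Finset ι} {t : ι → Set α}
    (hf : ∀ i ∈ s, (t i).Finite)
    (hd : ∀ i ∈ s, ∀ j ∈ s, i ≠ j → Disjoint (t i) (t j)) :
    (⋃ i ∈ s, t i).ncard = ∑ i ∈ s, (t i).ncard := by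
  classical
  induction s using Finset.induction_on with
  | empty => simp
  | @insert a s ha ih =>
    rw [Finset.set_biUnion_insert, Finset.sum_insert ha]
    have hfin2 : (⋃ x ∈ s, t x).Finite :=
      Set.Finite.biUnion s.finite_toSet
        (fun i hi => hf i (Finset.mem_insert_of_mem hi))
    have hdisj : Disjoint (t a) (⋃ x ∈ s, t x) := by
      rw [Set.disjoint_left]
      intro x hx hx2
      rw [Set.mem_iUnion₂] at hx2
      obtain ⟨i, hi, hxi⟩ := hx2
      exact Set.disjoint_left.mp
        (hd a (Finset.mem_insert_self a s) i (Finset.mem_insert_of_mem hi)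
          (fun h => ha (h ▸ hi))) hx hxi
    rw [Set.ncard_union_eq hdisj (hf a (Finset.mem_insert_self a s)) hfin2]
    rw [ih (fun i hi => hf i (Finset.mem_insert_of_mem hi))
        (fun i hi j hj hij => hd i (Finset.mem_insert_of_mem hi) j
          (Finset.mem_insert_of_mem hj) hij)]

lemma cardA (k m : ℕ) (hk : 3 ≤ k) :
    (WS k m 0 1).ncard = ∑ j ∈ Finset.Icc 1 (k - 1), (WS k (m - j) 0 0).ncard := by
  rw [cover1 k m (by omega)]
  rw [ncard_biUnion]
  · refine Finset.sum_congr rfl fun j hj => ?_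
    rw [Finset.mem_Icc] at hj
    rw [← Set.ncard_image_of_injOn (injOn_tl k m j 1),
      image_tl k m j 1 hj.1 (by omega), ncard_flip]
    norm_num [fl]
  · exact fun i _ => (WS_finite k m 0 1).subset fun w hw => hw.1
  · intro i _ j _ hij
    rw [Set.disjoint_left]
    rintro w ⟨_, h1, _⟩ ⟨_, h2, _⟩
    exact hij (h1 ▸ h2 ▸ rfl)

lemma cardB (k m : ℕ) (hk : 3 ≤ k) (hm : 1 ≤ m) :
    (WS k m 0 0).ncard =
      (∑ j ∈ Finset.Icc 1 (k - 1), (WS k (m - j) 0 1).ncard) +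
        (if m ≤ k - 1 then 1 else 0) := by
  rw [cover0 k m (by omega)]
  rw [Set.ncard_union_eq ?disj ?f1 ?f2, add_comm]
  case disj =>
    rw [Set.disjoint_left]
    rintro w ⟨_, h1⟩ hw2
    rw [Set.mem_iUnion₂] at hw2
    obtain ⟨i, _, _, _, h2⟩ := hw2
    exact h2 h1
  case f1 => exact (WS_finite k m 0 0).subset fun w hw => hw.1
  case f2 =>
    exact Set.Finite.biUnion (Finset.finite_toSet _)
      (fun i _ => (WS_finite k m 0 0).subset fun w hw => hw.1)
  congr 1
  · rw [ncard_biUnion]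
    · refine Finset.sum_congr rfl fun j hj => ?_
      rw [Finset.mem_Icc] at hj
      rw [← Set.ncard_image_of_injOn (injOn_tl k m j 0),
        image_tl k m j 0 hj.1 (by omega), ncard_flip]
      norm_num [fl]
    · exact fun i _ => (WS_finite k m 0 0).subset fun w hw => hw.1
    · intro i _ j _ hij
      rw [Set.disjoint_left]
      rintro w ⟨_, h1, _⟩ ⟨_, h2, _⟩
      exact hij (h1 ▸ h2 ▸ rfl)
  · rw [E_eq k m hk hm]
    split_ifs <;> simp
def ff (k m : ℕ) : ℤ :=
  if m = 0 then 0 else if m % k = 0 then -1 else if m % k = 1 then 1 else 0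

lemma sub_mod_zero_iff {a b n : ℕ} (h : b ≤ a) : (a - b) % n = 0 ↔ a % n = b % n := by
  constructor
  · intro h1
    have h2 : a = (a - b) + b := by omega
    rw [h2, Nat.add_mod, h1, zero_add, Nat.mod_mod_of_dvd b dvd_rfl]
  · exact Nat.sub_mod_eq_zero_of_mod_eq

lemma mod_one_iff {x k : ℕ} (hx : 1 ≤ x) (hk : 2 ≤ k) : x % k = 1 ↔ (x - 1) % k = 0 := by
  constructor
  · intro h
    have hd := Nat.div_add_mod x k
    rw [h] at hd
    have h2 : x - 1 = k * (x / k) := by omega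
    rw [h2]
    exact Nat.mul_mod_right _ _
  · intro h
    obtain ⟨q, hq⟩ := Nat.dvd_of_mod_eq_zero h
    have h2 : x = k * q + 1 := by omega
    have h1k : 1 % k = 1 := Nat.mod_eq_of_lt (by omega)
    rw [h2, Nat.add_mod, Nat.mul_mod_right, zero_add, h1k, h1k]

lemma sumf (k : ℕ) (hk : 3 ≤ k) (m : ℕ) (hm : 2 ≤ m) :
    ∑ j ∈ Finset.Icc 1 (k - 1), ff k (m - j)
      = (if m ≤ k - 1 then 1 else 0) - ff k m := by
  by_cases hmk : m ≤ k - 1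
  · rw [if_pos hmk]
    have hfm : ff k m = 0 := by
      unfold ff
      rw [Nat.mod_eq_of_lt (by omega)]
      rw [if_neg (by omega), if_neg (by omega), if_neg (by omega)]
    rw [hfm, sub_zero]
    have hcg : ∀ j ∈ Finset.Icc 1 (k - 1), ff k (m - j) = if j = m - 1 then 1 else 0 := by
      intro j hj
      rw [Finset.mem_Icc] at hj
      unfold ff
      rcases Nat.lt_trichotomy j (m - 1) with h | h | h
      · rw [Nat.mod_eq_of_lt (by omega)]
        rw [if_neg (by omega), if_neg (by omega), if_neg (by omega), if_neg (by omega)]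
      · rw [show m - j = 1 by omega, Nat.mod_eq_of_lt (by omega)]
        rw [if_neg (by omega), if_neg (by omega), if_pos rfl, if_pos (by omega)]
      · rw [show m - j = 0 by omega]
        rw [if_pos rfl, if_neg (by omega)]
    rw [Finset.sum_congr rfl hcg, Finset.sum_ite_eq' (Finset.Icc 1 (k - 1)) (m - 1)
      (fun _ => (1 : ℤ))]
    rw [if_pos (Finset.mem_Icc.mpr ⟨by omega, by omega⟩)]
  · rw [if_neg hmk]
    have hkm : k ≤ m := by omega
    have htk : m % k < k := Nat.mod_lt _ (by omega)
    set t := m % k with ht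
    set t' := if t = 0 then k - 1 else t - 1 with ht'
    have key : ∀ j ∈ Finset.Icc 1 (k - 1), ff k (m - j)
        = (if j = t then -1 else 0) + (if j = t' then 1 else 0) := by
      intro j hj
      rw [Finset.mem_Icc] at hj
      have hmj : 1 ≤ m - j := by omega
      have hz : (m - j) % k = 0 ↔ j = t := by
        rw [sub_mod_zero_iff (by omega)]
        rw [Nat.mod_eq_of_lt (by omega : j < k)]
        constructor
        · intro h; rw [ht, h]
        · intro h; rw [← ht, h]
      have ho : (m - j) % k = 1 ↔ j = t' := by
        rw [mod_one_iff hmj (by omega), show m - j - 1 = m - (j + 1) by omega,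
          sub_mod_zero_iff (by omega : j + 1 ≤ m)]
        by_cases hjk1 : j = k - 1
        · rw [hjk1, show k - 1 + 1 = k by omega, Nat.mod_self]
          constructor
          · intro h
            rw [ht', if_pos (by omega)]
          · intro h
            rw [ht'] at h
            by_cases h0 : t = 0
            · omega
            · rw [if_neg h0] at h; omega
        · rw [Nat.mod_eq_of_lt (by omega : j + 1 < k)]
          constructor
          · intro h
            rw [ht', if_neg (by omega)]
            omega
          · intro h
            rw [ht'] at h
            by_cases h0 : t = 0
            · rw [if_pos h0] at h; omega
            · rw [if_neg h0] at h; omega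
      unfold ff
      rw [if_neg (by omega : ¬ m - j = 0)]
      by_cases hA : j = t
      · rw [if_pos (hz.mpr hA), if_pos hA, if_neg (by
          intro hB
          rw [ht'] at hB
          by_cases h0 : t = 0
          · omega
          · rw [if_neg h0] at hB; omega)]
        ring
      · rw [if_neg (fun h => hA (hz.mp h)), if_neg hA]
        by_cases hB : j = t'
        · rw [if_pos (ho.mpr hB), if_pos hB]; ring
        · rw [if_neg (fun h => hB (ho.mp h)), if_neg hB]; ring
    rw [Finset.sum_congr rfl key, Finset.sum_add_distrib,
      Finset.sum_ite_eq' (Finset.Icc 1 (k - 1)) t (fun _ => (-1 : ℤ)),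
      Finset.sum_ite_eq' (Finset.Icc 1 (k - 1)) t' (fun _ => (1 : ℤ))]
    unfold ff
    rw [if_neg (by omega : ¬ m = 0), ← ht]
    simp only [Finset.mem_Icc]
    by_cases h0 : t = 0
    · rw [if_neg (by omega), if_pos (by rw [ht', if_pos h0]; constructor <;> omega),
        if_pos h0]
      ring
    · by_cases h1 : t = 1
      · rw [if_pos (by omega), if_neg (by rw [ht', if_neg h0]; omega),
          if_neg h0, if_pos h1]
        ring
      · rw [if_pos (by omega), if_pos (by rw [ht', if_neg h0]; constructor <;> omega),
          if_neg h0, if_neg h1]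
        ring
lemma WS0 (k : ℕ) (a b : Fin 2) : WS k 0 a b = ∅ := by
  ext w
  simp only [Set.mem_empty_iff_false, iff_false]
  rintro ⟨hlen, hhd, -, -⟩
  rw [length_eq_zero_iff] at hlen
  rw [hlen] at hhd
  simp at hhd

lemma WS1_01 (k : ℕ) : WS k 1 0 1 = ∅ := by
  ext w
  simp only [Set.mem_empty_iff_false, iff_false]
  rintro ⟨hlen, hhd, hlast, -⟩
  obtain ⟨x, rfl⟩ := length_eq_one_iff.mp hlen
  simp only [head?_cons, Option.some.injEq] at hhd
  simp only [getLast?_singleton, Option.some.injEq] at hlast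
  rw [hhd] at hlast
  exact one_ne_zero' hlast.symm

lemma WS1_00 (k : ℕ) (hk : 3 ≤ k) : WS k 1 0 0 = {[0]} := by
  ext w
  simp only [Set.mem_singleton_iff]
  constructor
  · rintro ⟨hlen, hhd, -, -⟩
    obtain ⟨x, rfl⟩ := length_eq_one_iff.mp hlen
    simp only [head?_cons, Option.some.injEq] at hhd
    rw [hhd]
  · rintro rfl
    refine ⟨rfl, rfl, rfl, ?_, ?_⟩ <;>
    · intro h
      have := h.length_le
      simp only [length_replicate] at this
      simp at this
      omega

lemma lemF (k : ℕ) (hk : 3 ≤ k) : ∀ m, 1 ≤ m →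
    ((WS k m 0 0).ncard : ℤ) = (WS k m 0 1).ncard + ff k m := by
  intro m
  induction m using Nat.strong_induction_on with
  | _ m ih =>
    intro hm
    rcases eq_or_lt_of_le hm with h1 | h2
    · rw [← h1, WS1_00 k hk, WS1_01 k]
      have hf1 : ff k 1 = 1 := by
        unfold ff
        rw [if_neg (by omega), Nat.mod_eq_of_lt (by omega), if_neg (by omega), if_pos rfl]
      rw [hf1]
      simp
    · have hm2 : 2 ≤ m := h2
      rw [cardB k m hk (by omega), cardA k m hk]
      push_cast
      have hstep : ∀ j ∈ Finset.Icc 1 (k - 1),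
          ((WS k (m - j) 0 0).ncard : ℤ) = ((WS k (m - j) 0 1).ncard : ℤ) + ff k (m - j) := by
        intro j hj
        rw [Finset.mem_Icc] at hj
        rcases Nat.eq_zero_or_pos (m - j) with hz | hpos
        · rw [hz, WS0, WS0]
          simp [ff]
        · exact ih (m - j) (by omega) hpos
      rw [Finset.sum_congr rfl hstep, Finset.sum_add_distrib, sumf k hk m hm2]
      ring
lemma mem_iff (k m : ℕ) (hm : 1 ≤ m) (w : List (Fin 2)) :
    (w.length = m ∧ w.getD 0 0 = 0 ∧ w.getD (m - 1) 0 = 1 ∧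
      (¬ ∃ v : List (Fin 2), v.length = k ∧ (∀ a ∈ v, a = 0) ∧ v <:+: w) ∧
      (¬ ∃ v : List (Fin 2), v.length = k ∧ (∀ a ∈ v, a = 1) ∧ v <:+: w)) ↔
      w ∈ WS k m 0 1 := by
  constructor
  · rintro ⟨hlen, hg0, hg1, hv0, hv1⟩
    have hidx : m - 1 < w.length := by omega
    refine ⟨hlen, ?_, ?_, ?_, ?_⟩
    · cases w with
      | nil => simp at hlen; omega
      | cons x xs => rw [getD_cons_zero] at hg0; rw [head?_cons, hg0]
    · rw [getLast?_eq_getElem?, hlen, getElem?_eq_getElem hidx]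
      rw [getD_eq_getElem?_getD, getElem?_eq_getElem hidx] at hg1
      rw [Option.getD_some] at hg1
      rw [hg1]
    · exact fun h => hv0 ⟨replicate k 0, length_replicate,
        fun a ha => eq_of_mem_replicate ha, h⟩
    · exact fun h => hv1 ⟨replicate k 1, length_replicate,
        fun a ha => eq_of_mem_replicate ha, h⟩
  · rintro ⟨hlen, hhd, hlast, hnr⟩
    have hidx : m - 1 < w.length := by omega
    refine ⟨hlen, ?_, ?_, ?_, ?_⟩
    · cases w with
      | nil => simp at hlen; omega
      | cons x xs =>
        rw [head?_cons, Option.some.injEq] at hhd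
        rw [getD_cons_zero, hhd]
    · rw [getLast?_eq_getElem?, hlen, getElem?_eq_getElem hidx, Option.some.injEq] at hlast
      rw [getD_eq_getElem?_getD, getElem?_eq_getElem hidx, Option.getD_some, hlast]
    · rintro ⟨v, hv1, hv2, hv3⟩
      rw [eq_replicate_iff.mpr ⟨hv1, hv2⟩] at hv3
      exact hnr.1 hv3
    · rintro ⟨v, hv1, hv2, hv3⟩
      rw [eq_replicate_iff.mpr ⟨hv1, hv2⟩] at hv3
      exact hnr.2 hv3

end Stmt14Aux

/-- For `I = {0}`, `J = {1}` (so `q = 2`) and `k ≥ 3`, the number `r n` of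
binary words of length `n` starting with `0`, ending with `1`, containing no `k`
consecutive `0`s and no `k` consecutive `1`s (with `r 0 = 1`, `r 1 = 0`, `r m = 0` for
`m < 0`) satisfies, for all `n ≥ 2`,
`r n = ∑_{j=1}^{k-1} r (n-j) + d n`, where `d n = 1` if `n ≡ 0 (mod k)`,
`d n = -1` if `n ≡ 1 (mod k)`, and `d n = 0` otherwise. -/
theorem stmt14 (k : ℕ) (hk : 3 ≤ k)
    (r : ℤ → ℕ)
    (hneg : ∀ m : ℤ, m < 0 → r m = 0) (h0 : r 0 = 1)
    (hcard : ∀ m : ℕ, 1 ≤ m → r m = Nat.card {w : List (Fin 2) //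
      w.length = m ∧ w.getD 0 0 = 0 ∧ w.getD (m - 1) 0 = 1 ∧
      (¬ ∃ v : List (Fin 2), v.length = k ∧ (∀ a ∈ v, a = 0) ∧ v <:+: w) ∧
      (¬ ∃ v : List (Fin 2), v.length = k ∧ (∀ a ∈ v, a = 1) ∧ v <:+: w)}) :
    ∀ n : ℤ, 2 ≤ n →
      (r n : ℤ) = (∑ j ∈ Finset.Icc 1 (k - 1), (r (n - j) : ℤ)) +
        (if n % k = 0 then 1 else if n % k = 1 then -1 else 0) := by
  classical
  intro n hn
  obtain ⟨nn, rfl⟩ : ∃ nn : ℕ, n = (nn : ℤ) := ⟨n.toNat, by omega⟩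
  have hn2 : 2 ≤ nn := by exact_mod_cast hn
  open Stmt14Aux in
  have hrws : ∀ m : ℕ, 1 ≤ m → r m = (Stmt14Aux.WS k m 0 1).ncard := by
    intro m hm
    rw [hcard m hm, ← Nat.card_coe_set_eq]
    exact Nat.card_congr (Equiv.subtypeEquivRight (Stmt14Aux.mem_iff k m hm))
  have hterm : ∀ j ∈ Finset.Icc 1 (k - 1),
      (r ((nn : ℤ) - (j : ℕ)) : ℤ)
        = ((Stmt14Aux.WS k (nn - j) 0 1).ncard : ℤ) + (if nn = j then 1 else 0) := by
    intro j hj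
    rw [Finset.mem_Icc] at hj
    rcases Nat.lt_trichotomy nn j with h | h | h
    · rw [hneg _ (by omega), show nn - j = 0 by omega, Stmt14Aux.WS0]
      simp [show nn ≠ j by omega]
    · rw [show (nn : ℤ) - (j : ℕ) = 0 by omega, h0,
        show nn - j = 0 by omega, Stmt14Aux.WS0]
      simp [h]
    · rw [show (nn : ℤ) - (j : ℕ) = ((nn - j : ℕ) : ℤ) by omega,
        hrws (nn - j) (by omega)]
      simp [show nn ≠ j by omega]
  rw [Finset.sum_congr rfl hterm, Finset.sum_add_distrib,
    Finset.sum_ite_eq (Finset.Icc 1 (k - 1)) nn (fun _ => (1 : ℤ))]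
  rw [hrws nn (by omega), Stmt14Aux.cardA k nn hk]
  push_cast
  have hstep : ∀ j ∈ Finset.Icc 1 (k - 1),
      ((Stmt14Aux.WS k (nn - j) 0 0).ncard : ℤ)
        = ((Stmt14Aux.WS k (nn - j) 0 1).ncard : ℤ) + Stmt14Aux.ff k (nn - j) := by
    intro j hj
    rcases Nat.eq_zero_or_pos (nn - j) with hz | hpos
    · rw [hz, Stmt14Aux.WS0, Stmt14Aux.WS0]
      simp [Stmt14Aux.ff]
    · exact Stmt14Aux.lemF k hk (nn - j) hpos
  rw [Finset.sum_congr rfl hstep, Finset.sum_add_distrib,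
    Stmt14Aux.sumf k hk nn hn2]
  have hd : (if (nn : ℤ) % (k : ℤ) = 0 then (1 : ℤ) else if (nn : ℤ) % (k : ℤ) = 1 then -1 else 0)
      = - Stmt14Aux.ff k nn := by
    unfold Stmt14Aux.ff
    rw [if_neg (by omega : ¬ nn = 0), ← Int.natCast_mod]
    by_cases h0' : nn % k = 0
    · rw [if_pos h0', if_pos (by exact_mod_cast congrArg (Nat.cast : ℕ → ℤ) h0')]
      try ring
    · rw [if_neg h0', if_neg (by exact_mod_cast h0')]
      by_cases h1' : nn % k = 1
      · rw [if_pos h1', if_pos (by exact_mod_cast congrArg (Nat.cast : ℕ → ℤ) h1')]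
        try ring
      · rw [if_neg h1', if_neg (by exact_mod_cast h1')]
        try ring
  rw [hd]
  have hmem : (nn ∈ Finset.Icc 1 (k - 1)) ↔ (nn ≤ k - 1) := by
    rw [Finset.mem_Icc]
    omega
  rw [if_congr hmem rfl rfl]
  ring
end

section
/- Let b(m) be the number of words of length m over \mathbb{Z}_q that contain no codeword of the variable-length non-overlapping code \mathcal{J} = \bigcup_{i=h}^n J(i) as a subword, with b(0)=1 and b(m)=0 for m<0. Then for all m \ge h: q \cdot b(m-1) - b(m) = \sum_{i=h}^{n} b(m-i) \cdot |J(i)|, and b(m) = q^m for 0 \le m < h. -/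
/-- A code, given as a set of words, is non-overlapping if (1) no nonempty proper
prefix of a codeword equals a nonempty proper suffix of a codeword (including of
itself), and (2) no codeword contains a distinct codeword as a contiguous subword. -/
def NonOverlapping {α : Type*} (S : Set (List α)) : Prop :=
  (∀ u ∈ S, ∀ v ∈ S, ∀ p : List α, p ≠ [] → p ≠ u → p ≠ v → p <+: u → ¬ p <:+ v) ∧
  (∀ u ∈ S, ∀ v ∈ S, u ≠ v → ¬ v <:+: u)


lemma aux_suffix_le {α : Type*} {S : Set (List α)} (hno : NonOverlapping S)
    {c c' p p' : List α} (hc : c ∈ S) (hc' : c' ∈ S) (he : p ++ c = p' ++ c')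
    (hle : c.length ≤ c'.length) : c = c' := by
  have h1 : c <:+ p' ++ c' := he ▸ List.suffix_append p c
  have h2 : c <:+ c' := List.suffix_of_suffix_length_le h1 (List.suffix_append p' c') hle
  by_contra hne
  exact hno.2 c' hc' c hc (fun hcon => hne hcon.symm) h2.isInfix

lemma aux_unique {α : Type*} {S : Set (List α)} (hno : NonOverlapping S)
    {c c' p p' : List α} (hc : c ∈ S) (hc' : c' ∈ S) (he : p ++ c = p' ++ c') :
    c = c' ∧ p = p' := by
  have hcc : c = c' := by
    rcases le_total c.length c'.length with hle | hle
    · exact aux_suffix_le hno hc hc' he hle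
    · exact (aux_suffix_le hno hc' hc he.symm hle).symm
  subst hcc
  exact ⟨rfl, List.append_left_injective c he⟩

lemma aux_good_ext {α : Type*} {S : Set (List α)} (hno : NonOverlapping S)
    {p c c' : List α} (hp : ¬ ∃ d ∈ S, d <:+: p) (hc : c ∈ S) (hpre : c' <+: c)
    (hlt : c'.length < c.length) : ¬ ∃ d ∈ S, d <:+: p ++ c' := by
  rintro ⟨d, hd, s, t, hst⟩
  by_cases h1 : s.length + d.length ≤ p.length
  · -- d lies within p
    have hsd : s ++ d <+: p := by
      have h2 : s ++ d <+: p ++ c' := ⟨t, by simpa [List.append_assoc] using hst⟩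
      exact List.prefix_of_prefix_length_le h2 (List.prefix_append p c')
        (by simpa using h1)
    exact hp ⟨d, hd, ((List.suffix_append s d).isInfix).trans hsd.isInfix⟩
  · by_cases h2 : p.length ≤ s.length
    · -- d lies within c'
      have hs : p <+: s := by
        refine List.prefix_of_prefix_length_le (List.prefix_append p c') ?_ h2
        exact ⟨d ++ t, by simpa [List.append_assoc] using hst⟩
      obtain ⟨s', rfl⟩ := hs
      have h3 : s' ++ d ++ t = c' := by
        apply List.append_cancel_left (as := p)
        simpa [List.append_assoc] using hst
      have hdc : d <:+: c := List.IsInfix.trans ⟨s', t, h3⟩ hpre.isInfix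
      have hlen' : d.length ≤ c'.length := List.IsInfix.length_le ⟨s', t, h3⟩
      have hdne : d ≠ c := by rintro rfl; omega
      exact hno.2 c hc d hd (fun hcon => hdne hcon.symm) hdc
    · -- d straddles the boundary
      push_neg at h1 h2
      obtain ⟨k, hk⟩ : ∃ k, k = p.length - s.length := ⟨_, rfl⟩
      have hk1 : 0 < k := by omega
      have hk2 : k < d.length := by omega
      have hp1 : p <+: s ++ d := by
        refine List.prefix_of_prefix_length_le (List.prefix_append p c')
          ⟨t, by simpa [List.append_assoc] using hst⟩ (by simp; omega)
      obtain ⟨r, hr⟩ := hp1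
      have hrd : r = d.drop k := by
        have h4 : r = (p ++ r).drop p.length := by simp
        rw [hr, List.drop_append] at h4
        rw [h4]
        rw [hk]; simp
        omega
      have hsplit : s ++ d = p ++ d.drop k := by rw [← hrd, hr]
      have hd2 : d.drop k ++ t = c' := by
        apply List.append_cancel_left (as := p)
        rw [← List.append_assoc, ← hsplit]
        simpa [List.append_assoc] using hst
      have hd2pre : d.drop k <+: c := List.IsPrefix.trans ⟨t, hd2⟩ hpre
      have hlen2 : (d.drop k).length ≤ c'.length := List.IsPrefix.length_le ⟨t, hd2⟩
      simp only [List.length_drop] at hlen2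
      have hne1 : d.drop k ≠ [] := by
        intro hnil
        have := congrArg List.length hnil; simp at this; omega
      have hne2 : d.drop k ≠ c := by
        intro hcon
        have := congrArg List.length hcon; simp at this; omega
      have hne3 : d.drop k ≠ d := by
        intro hcon
        have := congrArg List.length hcon; simp at this; omega
      exact hno.1 c hc d hd (d.drop k) hne1 hne2 hne3 hd2pre (List.drop_suffix k d)


lemma card_len (q m : ℕ) : Nat.card {w : List (Fin q) // w.length = m} = q ^ m := by
  have e : {w : List (Fin q) // w.length = m} ≃ List.Vector (Fin q) m := Equiv.refl _
  rw [Nat.card_congr e, Nat.card_eq_fintype_card, card_vector, Fintype.card_fin]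

lemma nat_card_sigma {ι : Type*} [Fintype ι] (f : ι → Type*) [∀ i, Finite (f i)] :
    Nat.card (Sigma f) = ∑ i, Nat.card (f i) := by
  have : ∀ i, Fintype (f i) := fun i => Fintype.ofFinite _
  simp [Nat.card_eq_fintype_card, Fintype.card_sigma]


/-- Let `b m` be the number of words of length `m` over `ℤ_q` containing
no codeword of the variable-length non-overlapping code `𝒥 = ⋃_{i=h}^n J(i)` as a
subword, with `b 0 = 1` and `b m = 0` for `m < 0`. Then for all `m ≥ h`,
`q·b (m-1) - b m = ∑_{i=h}^n b (m-i)·|J(i)|`, and `b m = q^m` for `0 ≤ m < h`. -/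
theorem stmt15 (q h n : ℕ) (hq : 2 ≤ q) (hh : 2 ≤ h) (hhn : h ≤ n)
    (𝒥 : Set (List (Fin q))) (hlen : ∀ w ∈ 𝒥, h ≤ w.length ∧ w.length ≤ n)
    (hno : NonOverlapping 𝒥)
    (Jc : ℕ → ℕ) (hJc : ∀ i : ℕ, Jc i = Nat.card {w : List (Fin q) // w ∈ 𝒥 ∧ w.length = i})
    (b : ℤ → ℕ)
    (hbneg : ∀ m : ℤ, m < 0 → b m = 0) (hb0 : b 0 = 1)
    (hbcard : ∀ m : ℕ, 1 ≤ m → b m = Nat.card {w : List (Fin q) //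
      w.length = m ∧ ¬ ∃ c ∈ 𝒥, c <:+: w}) :
    (∀ m : ℤ, (h : ℤ) ≤ m →
        (q : ℤ) * b (m - 1) - b m = ∑ i ∈ Finset.Icc h n, (b (m - i) : ℤ) * Jc i) ∧
      (∀ m : ℕ, m < h → b m = q ^ m) := by
  classical
  set G : ℕ → Set (List (Fin q)) := fun k => {w | w.length = k ∧ ¬ ∃ c ∈ 𝒥, c <:+: w}
    with hGdef
  have hGfin : ∀ k, (G k).Finite := fun k =>
    (List.finite_length_eq (Fin q) k).subset fun w hw => hw.1
  have hGmem : ∀ k w, w ∈ G k ↔ (w.length = k ∧ ¬ ∃ c ∈ 𝒥, c <:+: w) := fun k w => Iff.rfl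
  have hGcard : ∀ k : ℕ, b k = Nat.card ↥(G k) := by
    intro k
    rcases Nat.eq_zero_or_pos k with rfl | hk
    · have hG0 : G 0 = {([] : List (Fin q))} := by
        ext w
        simp only [hGdef, Set.mem_setOf_eq, Set.mem_singleton_iff, List.length_eq_zero_iff]
        constructor
        · exact fun hw => hw.1
        · rintro rfl
          refine ⟨rfl, ?_⟩
          rintro ⟨c, hc, hinf⟩
          have h1 := hinf.length_le
          have h2 := (hlen c hc).1
          simp only [List.length_nil] at h1
          omega
      rw [hG0, Nat.card_coe_set_eq, Set.ncard_singleton]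
      simpa using hb0
    · exact hbcard k hk
  have part2 : ∀ m : ℕ, m < h → b m = q ^ m := by
    intro m hm
    rcases Nat.eq_zero_or_pos m with rfl | hm1
    · simpa using hb0
    · rw [hbcard m hm1, ← card_len q m]
      apply Nat.card_congr
      apply Equiv.subtypeEquivRight
      intro w
      constructor
      · exact fun hw => hw.1
      · intro hw
        refine ⟨hw, ?_⟩
        rintro ⟨c, hc, hinf⟩
        have h1 := hinf.length_le
        have h2 := (hlen c hc).1
        omega
  have main : ∀ M : ℕ, h ≤ M →
      q * b ↑(M - 1) = b ↑M + ∑ i ∈ Finset.Icc h (min n M), b ↑(M - i) * Jc i := by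
    intro M hM
    set Js : ℕ → Set (List (Fin q)) := fun i => {c | c ∈ 𝒥 ∧ c.length = i} with hJsdef
    have hJsfin : ∀ i, (Js i).Finite := fun i =>
      (List.finite_length_eq (Fin q) i).subset fun c hc => hc.2
    have hJscard : ∀ i, Jc i = Nat.card ↥(Js i) := fun i => hJc i
    set W : Set (List (Fin q)) := {w | w.length = M ∧ w.dropLast ∈ G (M - 1)} with hWdef
    have hWfin : W.Finite := (List.finite_length_eq (Fin q) M).subset fun w hw => hw.1
    -- Step A : card W = b (M-1) * q
    let fA : ↥(G (M - 1)) × Fin q → ↥W := fun pa => ⟨pa.1.1 ++ [pa.2], by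
      have hp := pa.1.2
      rw [hGmem] at hp
      constructor
      · simp only [List.length_append, List.length_singleton, hp.1]; omega
      · rw [List.dropLast_concat]; exact pa.1.2⟩
    have hfA : Function.Bijective fA := by
      constructor
      · rintro ⟨⟨p, hp⟩, a⟩ ⟨⟨p', hp'⟩, a'⟩ hEq
        simp only [fA, Subtype.mk.injEq] at hEq
        have h2 := List.append_inj' hEq rfl
        simp only [List.cons.injEq, and_true] at h2
        simp [h2.1, h2.2]
      · rintro ⟨w, hw⟩
        have hwne : w ≠ [] := by
          intro hnil
          have := hw.1
          rw [hnil] at this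
          simp at this
          omega
        refine ⟨⟨⟨w.dropLast, hw.2⟩, w.getLast hwne⟩, ?_⟩
        exact Subtype.ext (List.dropLast_append_getLast hwne)
    have cardA : Nat.card ↥W = b ↑(M - 1) * q := by
      rw [← Nat.card_congr (Equiv.ofBijective fA hfA), Nat.card_prod, ← hGcard,
        Nat.card_eq_fintype_card, Fintype.card_fin]
    -- Step B : G M ⊆ W
    have hGW : G M ⊆ W := by
      intro w hw
      rw [hGmem] at hw
      refine ⟨hw.1, ?_, ?_⟩
      · rw [List.length_dropLast, hw.1]
      · rintro ⟨c, hc, hinf⟩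
        exact hw.2 ⟨c, hc, hinf.trans (List.dropLast_prefix w).isInfix⟩
    have cardB : (W \ G M).ncard + (G M).ncard = W.ncard :=
      Set.ncard_diff_add_ncard_of_subset hGW hWfin
    -- Step C : card (W \ G M) = ∑
    have hfinIcc : ∀ i : ↥(Finset.Icc h (min n M)), True := fun _ => trivial
    haveI : ∀ k, Finite ↥(G k) := fun k => (hGfin k).to_subtype
    haveI : ∀ i, Finite ↥(Js i) := fun i => (hJsfin i).to_subtype
    let gC : (Σ i : ↥(Finset.Icc h (min n M)), ↥(G (M - i.1)) × ↥(Js i.1)) → ↥(W \ G M) := by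
      rintro ⟨⟨i, hi⟩, ⟨p, hp⟩, ⟨c, hc⟩⟩
      rw [Finset.mem_Icc] at hi
      rw [hGmem] at hp
      have hcJ : c ∈ 𝒥 := hc.1
      have hclen : c.length = i := hc.2
      have hcne : c ≠ [] := by
        intro hnil; rw [hnil] at hclen; simp at hclen; omega
      refine ⟨p ++ c, ⟨?_, ?_⟩, ?_⟩
      · simp only [List.length_append, hp.1, hclen]; omega
      · rw [List.dropLast_append_of_ne_nil (l' := p) hcne, hGmem]
        refine ⟨?_, ?_⟩
        · simp only [List.length_append, hp.1, List.length_dropLast, hclen]; omega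
        · exact aux_good_ext hno hp.2 hcJ (List.dropLast_prefix c)
            (by rw [List.length_dropLast]; omega)
      · rw [hGmem]
        rintro ⟨-, hgood⟩
        exact hgood ⟨c, hcJ, (List.suffix_append p c).isInfix⟩
    have hgC : Function.Bijective gC := by
      constructor
      · rintro ⟨⟨i, hi⟩, ⟨p, hp⟩, ⟨c, hc⟩⟩ ⟨⟨i', hi'⟩, ⟨p', hp'⟩, ⟨c', hc'⟩⟩ hEq
        have hEq' : p ++ c = p' ++ c' := congrArg Subtype.val hEq
        obtain ⟨hcc, hpp⟩ := aux_unique hno hc.1 hc'.1 hEq'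
        have hii : i = i' := by
          have t1 : c.length = i := hc.2
          have t2 : c'.length = i' := hc'.2
          rw [← t1, ← t2, hcc]
        subst hii; subst hcc; subst hpp
        rfl
      · rintro ⟨w, hwW, hwG⟩
        obtain ⟨hwlen, hwdl⟩ := hwW
        rw [hGmem] at hwG
        have hex : ∃ c ∈ 𝒥, c <:+: w := by
          by_contra hcon
          exact hwG ⟨hwlen, hcon⟩
        obtain ⟨c, hcJ, s, t, hst⟩ := hex
        rw [hGmem] at hwdl
        have hcne : c ≠ [] := by
          intro hnil
          have := (hlen c hcJ).1; rw [hnil] at this; simp at this; omega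
        have ht : t = [] := by
          by_contra htne
          refine hwdl.2 ⟨c, hcJ, s, t.dropLast, ?_⟩
          rw [← hst, List.dropLast_append_of_ne_nil (l' := s ++ c) htne]
        subst ht
        rw [List.append_nil] at hst
        have hclen1 := (hlen c hcJ).1
        have hclen2 := (hlen c hcJ).2
        have hslen : s.length + c.length = M := by
          have := congrArg List.length hst; simpa [hwlen] using this
        have hiIcc : c.length ∈ Finset.Icc h (min n M) := by
          rw [Finset.mem_Icc]
          exact ⟨hclen1, le_min hclen2 (by omega)⟩
        have hsG : s ∈ G (M - c.length) := by
          rw [hGmem]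
          constructor
          · omega
          · rintro ⟨d, hd, hinf⟩
            refine hwdl.2 ⟨d, hd, hinf.trans ?_⟩
            have hdl : w.dropLast = s ++ c.dropLast := by
              rw [← hst, List.dropLast_append_of_ne_nil (l' := s) hcne]
            rw [hdl]
            exact (List.prefix_append s c.dropLast).isInfix
        refine ⟨⟨⟨c.length, hiIcc⟩, ⟨s, hsG⟩, ⟨c, hcJ, rfl⟩⟩, ?_⟩
        exact Subtype.ext hst
    have cardC : (W \ G M).ncard = ∑ i ∈ Finset.Icc h (min n M), b ↑(M - i) * Jc i := by
      rw [← Nat.card_coe_set_eq, ← Nat.card_congr (Equiv.ofBijective gC hgC),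
        nat_card_sigma,
        ← Finset.sum_coe_sort (Finset.Icc h (min n M)) (fun i => b ↑(M - i) * Jc i)]
      refine Finset.sum_congr rfl fun i _ => ?_
      rw [Nat.card_prod, ← hGcard, hJscard]
    have h1 : W.ncard = b ↑(M - 1) * q := by rw [← Nat.card_coe_set_eq, cardA]
    have h2 : (G M).ncard = b ↑M := by rw [← Nat.card_coe_set_eq, hGcard]
    rw [cardC, h1, h2] at cardB
    linarith [cardB]
  refine ⟨?_, part2⟩
  intro m hm
  have hm0 : 0 ≤ m := by omega
  obtain ⟨M, rfl⟩ := Int.eq_ofNat_of_zero_le hm0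
  have hM : h ≤ M := by exact_mod_cast hm
  have key := main M hM
  have e1 : ((M : ℤ) - 1) = ((M - 1 : ℕ) : ℤ) := by omega
  have e3 : ∑ i ∈ Finset.Icc h n, (b ((M : ℤ) - i) : ℤ) * Jc i
      = ∑ i ∈ Finset.Icc h (min n M), (b ((M : ℤ) - i) : ℤ) * Jc i := by
    symm
    apply Finset.sum_subset
    · exact Finset.Icc_subset_Icc_right (min_le_left n M)
    · intro i hiIn hiNot
      have hi1 := Finset.mem_Icc.mp hiIn
      have hiM : M < i := by
        rcases Nat.lt_or_ge M i with h' | h'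
        · exact h'
        · exact absurd (Finset.mem_Icc.mpr ⟨hi1.1, le_min hi1.2 h'⟩) hiNot
      rw [hbneg ((M : ℤ) - i) (by omega)]
      simp
  have e4 : ∑ i ∈ Finset.Icc h (min n M), (b ((M : ℤ) - i) : ℤ) * Jc i
      = ∑ i ∈ Finset.Icc h (min n M), (b ((M - i : ℕ) : ℤ) : ℤ) * Jc i := by
    refine Finset.sum_congr rfl fun i hi => ?_
    have hi' := Finset.mem_Icc.mp hi
    have hiM : i ≤ M := le_trans hi'.2 (min_le_right n M)
    have : ((M : ℤ) - i) = ((M - i : ℕ) : ℤ) := by omega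
    rw [this]
  rw [e3, e4, e1]
  have key' : ((q * b ↑(M - 1) : ℕ) : ℤ)
      = ((b ↑M + ∑ i ∈ Finset.Icc h (min n M), b ↑(M - i) * Jc i : ℕ) : ℤ) := by
    exact_mod_cast key
  rw [Nat.cast_add, Nat.cast_mul, Nat.cast_sum] at key'
  simp only [Nat.cast_mul] at key'
  linarith [key']
end

section
/- Let \mathcal{J} = \bigcup_{i=h}^n J(i) be a q-ary non-overlapping code with 2 \le h \le n, and let b(m) count length-m words avoiding all codewords of \mathcal{J} as subwords. Then for any 1 \le m < h, |J(n)| < q^n/(m+n) - q^{-m} \sum_{i=h}^{n-1} b(m+n-i) \cdot |J(i)|. -/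
namespace Stmt16Aux

open List
open scoped Fin.NatCast Fin.CommRing

variable {q N : ℕ} [NeZero q] [NeZero N]

/-- `a` occurs cyclically in `w` at position `j`. -/
def OccAt (a : List (Fin q)) (w : Fin N → Fin q) (j : Fin N) : Prop :=
  ∀ k : ℕ, (hk : k < a.length) → w (j + (k : Fin N)) = a[k]

/-- The cyclic word of length `N` with `a` at position `j`, followed by `u`. -/
def fill (a : List (Fin q)) (j : Fin N) (u : List (Fin q)) : Fin N → Fin q :=
  fun x => if hr : ((x - j : Fin N) : ℕ) < a.length
    then a[((x - j : Fin N) : ℕ)]'hr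
    else u.getD (((x - j : Fin N) : ℕ) - a.length) 0

lemma add_cast_sub (j : Fin N) {k : ℕ} (hk : k < N) :
    ((j + (k : Fin N) - j : Fin N) : ℕ) = k := by
  rw [add_sub_cancel_left]; exact Fin.val_cast_of_lt hk

lemma fill_occAt {a : List (Fin q)} (ha : a.length ≤ N) (j : Fin N) (u : List (Fin q)) :
    OccAt a (fill a j u) j := by
  intro k hk
  have hkN : k < N := lt_of_lt_of_le hk ha
  simp only [fill, add_cast_sub j hkN, dif_pos hk]

lemma fill_out {a : List (Fin q)} (j : Fin N) (u : List (Fin q)) {s : ℕ}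
    (hs : a.length + s < N) (hsu : s < u.length) :
    fill a j u (j + ((a.length + s : ℕ) : Fin N)) = u[s] := by
  simp only [fill, add_cast_sub j hs, dif_neg (by omega : ¬ a.length + s < a.length)]
  rw [Nat.add_sub_cancel_left]
  exact List.getD_eq_getElem u 0 hsu

/-- Two overlapping cyclic occurrences of codewords must coincide. -/
lemma overlap_eq {𝒥 : Set (List (Fin q))} (hno : NonOverlapping 𝒥)
    {a e : List (Fin q)} (ha : a ∈ 𝒥) (he : e ∈ 𝒥)
    (haN : a.length ≤ N) (heN : e.length ≤ N)
    {w : Fin N → Fin q} {j j' : Fin N}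
    (ho : OccAt a w j) (ho' : OccAt e w j')
    (ht : ((j' - j : Fin N) : ℕ) < a.length) : a = e ∧ j = j' := by
  set t : ℕ := ((j' - j : Fin N) : ℕ) with htdef
  have hj' : j' = j + ((t : ℕ) : Fin N) := by
    rw [htdef, Fin.cast_val_eq_self, add_sub_cancel]
  have key : ∀ (s : ℕ) (hs : s < e.length) (h2 : t + s < a.length), e[s]'hs = a[t + s]'h2 := by
    intro s hs h2
    calc e[s]'hs = w (j' + (s : Fin N)) := (ho' s hs).symm
      _ = w (j + ((t + s : ℕ) : Fin N)) := by rw [hj', Nat.cast_add, add_assoc]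
      _ = a[t + s]'h2 := ho (t + s) h2
  rcases Nat.eq_zero_or_pos t with ht0 | htpos
  · -- same starting position
    have hjj : j = j' := by
      have h0 : j' - j = 0 := by
        apply Fin.ext
        rw [Fin.val_zero]; exact ht0
      exact (sub_eq_zero.mp h0).symm
    rcases le_or_gt a.length e.length with hle | hlt
    · have hae : a = e.take a.length := by
        apply List.ext_getElem (by simp [hle])
        intro k h1 h2
        rw [List.getElem_take]
        have := key k (by omega) (by omega)
        simpa [ht0] using this.symm
      have hpre : a <+: e := hae ▸ List.take_prefix _ _
      rcases eq_or_lt_of_le hle with heq | hlt2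
      · exact ⟨hpre.eq_of_length heq, hjj⟩
      · exact absurd hpre.isInfix (hno.2 e he a ha (fun hEq => by rw [hEq] at hlt2; omega))
    · exfalso
      have hea : e = a.take e.length := by
        apply List.ext_getElem (by simp; omega)
        intro k h1 h2
        rw [List.getElem_take]
        have := key k (by omega) (by omega)
        simpa [ht0] using this
      have hpre : e <+: a := hea ▸ List.take_prefix _ _
      exact absurd hpre.isInfix (hno.2 a ha e he (fun hEq => by rw [hEq] at hlt; omega))
  · exfalso
    rcases le_or_gt (t + e.length) a.length with hin | hout
    · -- e strictly inside a
      have hea : e = (a.drop t).take e.length := by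
        apply List.ext_getElem (by simp; omega)
        intro k h1 h2
        rw [List.getElem_take, List.getElem_drop]
        exact key k (by omega) (by omega)
      have hinf : e <:+: a :=
        hea ▸ ((List.take_prefix _ _).isInfix.trans (List.drop_suffix t a).isInfix)
      have hne : e ≠ a := by
        intro hEq
        have := congrArg List.length hEq
        omega
      exact absurd hinf (hno.2 a ha e he hne.symm)
    · -- partial overlap: suffix of a = prefix of e
      have hp : a.drop t = e.take (a.length - t) := by
        apply List.ext_getElem (by simp; omega)
        intro k h1 h2
        rw [List.getElem_take, List.getElem_drop]
        exact (key k (by simp at h1; omega) (by simp at h1; omega)).symm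
      refine absurd (List.drop_suffix t a) (hno.1 e he a ha (a.drop t) ?_ ?_ ?_ ?_)
      · intro hEq
        have := congrArg List.length hEq
        simp at this; omega
      · intro hEq
        have := congrArg List.length hEq
        simp at this; omega
      · intro hEq
        have := congrArg List.length hEq
        simp at this; omega
      · exact hp ▸ List.take_prefix _ _

/-- If the codeword and position agree, the complementary word is determined. -/
lemma fill_u_eq {a u u' : List (Fin q)} (haN : a.length ≤ N)
    (hu : u.length = N - a.length) (hu' : u'.length = N - a.length) {j : Fin N}
    (hEq : fill a j u = fill a j u') : u = u' := by
  apply List.ext_getElem (by omega)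
  intro s h1 h2
  have hs : a.length + s < N := by omega
  rw [← fill_out j u hs h1, ← fill_out j u' hs h2, hEq]

/-- Main injectivity: two `fill` presentations of the same word coincide. -/
lemma fill_inj {𝒥 : Set (List (Fin q))} (hno : NonOverlapping 𝒥)
    {a e u u' : List (Fin q)} (ha : a ∈ 𝒥) (he : e ∈ 𝒥)
    (ha2 : 2 ≤ a.length) (haN : a.length ≤ N)
    (he2 : 2 ≤ e.length) (heN : e.length ≤ N)
    (hu : u.length = N - a.length) (hu' : u'.length = N - e.length)
    (hu'avoid : ¬ ∃ c ∈ 𝒥, c <:+: u')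
    {j j' : Fin N} (hEq : fill a j u = fill e j' u') :
    a = e ∧ j = j' ∧ u = u' := by
  have ho : OccAt a (fill a j u) j := fill_occAt haN j u
  have ho' : OccAt e (fill a j u) j' := hEq ▸ fill_occAt heN j' u'
  by_cases ht : ((j' - j : Fin N) : ℕ) < a.length
  · obtain ⟨hae, hjj⟩ := overlap_eq hno ha he haN heN ho ho' ht
    subst hae; subst hjj
    exact ⟨rfl, rfl, fill_u_eq haN hu hu' hEq⟩
  · by_cases ht' : ((j - j' : Fin N) : ℕ) < e.length
    · obtain ⟨hae, hjj⟩ := overlap_eq hno he ha heN haN ho' ho ht'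
      subst hae; subst hjj
      exact ⟨rfl, rfl, fill_u_eq haN hu hu' hEq⟩
    · -- disjoint occurrences: `a` would be an infix of `u'`, contradiction
      exfalso
      push_neg at ht ht'
      obtain ⟨t, htdef⟩ : ∃ t, ((j' - j : Fin N) : ℕ) = t := ⟨_, rfl⟩
      obtain ⟨t', ht'def⟩ : ∃ t', ((j - j' : Fin N) : ℕ) = t' := ⟨_, rfl⟩
      rw [htdef] at ht
      rw [ht'def] at ht'
      have htt' : t + t' = N := by
        have hz : ((j' - j) + (j - j') : Fin N) = 0 := by ring
        have hv : (t + t') % N = 0 := by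
          have h := Fin.val_add (j' - j) (j - j')
          rw [hz] at h
          rw [htdef, ht'def] at h
          simp only [Fin.val_zero] at h
          exact h.symm
        have h1 : t < N := htdef ▸ (j' - j).isLt
        have h2 : t' < N := ht'def ▸ (j - j').isLt
        have h3 : 2 ≤ a.length := ha2
        have h6 : 2 ≤ e.length := he2
        obtain ⟨k, hk⟩ : N ∣ t + t' := Nat.dvd_of_mod_eq_zero hv
        rcases k with _ | _ | k
        · omega
        · omega
        · have h8 : N * 2 ≤ N * (k + 1 + 1) := Nat.mul_le_mul_left N (by omega)
          omega
      have hwrap : ∀ k, k < a.length → t' + k < N := by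
        intro k hk
        by_contra hge
        push_neg at hge
        omega
      -- evaluate the word on the `a`-occurrence through the `e`-presentation
      have keyk : ∀ (k : ℕ) (hk : k < a.length),
          a[k]'hk = u'[t' - e.length + k]'(by omega) := by
        intro k hk
        have hkN : k < N := by omega
        have h1 : ((j + (k : Fin N) - j' : Fin N) : ℕ) = t' + k := by
          have e1 : j + (k : Fin N) - j' = (j - j') + (k : Fin N) := by ring
          rw [e1, Fin.val_add, Fin.val_cast_of_lt hkN, ht'def,
            Nat.mod_eq_of_lt (hwrap k hk)]
        have h2 := ho k hk
        rw [hEq] at h2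
        unfold fill at h2
        rw [dif_neg (by rw [h1]; omega)] at h2
        rw [h1] at h2
        have hbb : t' + k - e.length < u'.length := by omega
        rw [List.getD_eq_getElem u' 0 hbb] at h2
        rw [← h2]
        congr 1
        omega
      have hinf : a <:+: u' := by
        have hlen : a.length + (t' - e.length) ≤ u'.length := by
          have := hwrap (a.length - 1) (by omega)
          omega
        have : a = (u'.drop (t' - e.length)).take a.length := by
          apply List.ext_getElem (by simp; omega)
          intro k h1 h2
          rw [List.getElem_take, List.getElem_drop]
          exact keyk k h1
        exact this ▸ ((List.take_prefix _ _).isInfix.trans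
          (List.drop_suffix _ _).isInfix)
      exact hu'avoid ⟨a, ha, hinf⟩

lemma fill_ne_zero {𝒥 : Set (List (Fin q))} (hno : NonOverlapping 𝒥)
    {a : List (Fin q)} (ha : a ∈ 𝒥) (ha2 : 2 ≤ a.length) (haN : a.length ≤ N)
    (j : Fin N) (u : List (Fin q)) : fill a j u ≠ fun _ => (0 : Fin q) := by
  intro hEq
  have ho : OccAt a (fun _ => (0 : Fin q)) j := hEq ▸ fill_occAt haN j u
  have hall : ∀ (k : ℕ) (hk : k < a.length), a[k]'hk = 0 := fun k hk => (ho k hk).symm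
  have hne : a ≠ [] := by intro h; rw [h] at ha2; simp at ha2
  have hpre : [(0 : Fin q)] <+: a := by
    obtain ⟨x, rest, rfl⟩ : ∃ x rest, a = x :: rest := by
      cases a with
      | nil => exact absurd rfl hne
      | cons x rest => exact ⟨x, rest, rfl⟩
    have hx : x = 0 := hall 0 (by simp)
    exact ⟨rest, by rw [hx]; rfl⟩
  have hsuf : [(0 : Fin q)] <:+ a := by
    refine ⟨a.dropLast, ?_⟩
    have hlast : a.getLast hne = 0 := by
      rw [List.getLast_eq_getElem]
      exact hall _ (by omega)
    rw [← hlast]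
    exact List.dropLast_append_getLast hne
  refine hno.1 a ha a ha [(0 : Fin q)] (by simp) ?_ ?_ hpre hsuf
  · intro h
    have := congrArg List.length h
    simp at this; omega
  · intro h
    have := congrArg List.length h
    simp at this; omega

end Stmt16Aux

namespace Stmt16Aux

open List

/-! ### Counting infrastructure -/

lemma aux_finite {α : Type*} [Finite α] {Q : List α → Prop} {L : ℕ}
    (hQ : ∀ l, Q l → l.length ≤ L) : Finite {l : List α // Q l} := by
  haveI : Finite {l : List α | l.length ≤ L} := (List.finite_length_le α L).to_subtype
  apply Finite.of_injective
    (fun x => (⟨x.1, hQ x.1 x.2⟩ : {l : List α | l.length ≤ L}))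
  intro x y hxy
  cases x; cases y
  simpa [Subtype.mk.injEq] using hxy

lemma aux_card_len (α : Type*) [Fintype α] (L : ℕ) :
    Nat.card {l : List α // l.length = L} = Fintype.card α ^ L := by
  have : Nat.card (List.Vector α L) = Fintype.card α ^ L := by
    rw [Nat.card_eq_fintype_card, card_vector]
  exact this

lemma aux_card_sigma {ι : Type*} [Fintype ι] (f : ι → Type*) [∀ i, Finite (f i)] :
    Nat.card ((i : ι) × f i) = ∑ i, Nat.card (f i) := by
  classical
  letI : ∀ i, Fintype (f i) := fun i => Fintype.ofFinite (f i)
  simp only [Nat.card_eq_fintype_card, Fintype.card_sigma]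

lemma aux_card_option (α : Type*) [Finite α] : Nat.card (Option α) = Nat.card α + 1 := by
  letI := Fintype.ofFinite α
  simp [Nat.card_eq_fintype_card]

lemma finite_J {q : ℕ} (𝒥 : Set (List (Fin q))) (i : ℕ) :
    Finite {w : List (Fin q) // w ∈ 𝒥 ∧ w.length = i} :=
  aux_finite (fun l hl => hl.2.le)

lemma finite_A {q : ℕ} (𝒥 : Set (List (Fin q))) (L : ℕ) :
    Finite {w : List (Fin q) // w.length = L ∧ ¬ ∃ c ∈ 𝒥, c <:+: w} :=
  aux_finite (fun l hl => hl.1.le)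

/-- The index type for the counting argument. -/
def ECode (q N : ℕ) (𝒥 : Set (List (Fin q))) (h n : ℕ) : Type :=
  (i : (Finset.Icc h n : Finset ℕ)) ×
    ({w : List (Fin q) // w ∈ 𝒥 ∧ w.length = (i : ℕ)} ×
      (Fin N × {w : List (Fin q) // w.length = N - (i : ℕ) ∧ ¬ ∃ c ∈ 𝒥, c <:+: w}))

instance (q N : ℕ) (𝒥 : Set (List (Fin q))) (h n : ℕ) : Finite (ECode q N 𝒥 h n) := by
  haveI := fun i : ℕ => finite_J 𝒥 i
  haveI := fun L : ℕ => finite_A 𝒥 L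
  unfold ECode
  infer_instance

/-- The injection from `Option (ECode ...)` into the cyclic words of length `N`. -/
def Fmap (q N : ℕ) [NeZero q] [NeZero N] (𝒥 : Set (List (Fin q))) (h n : ℕ) :
    Option (ECode q N 𝒥 h n) → (Fin N → Fin q)
  | none => fun _ => 0
  | some p => fill p.2.1.1 p.2.2.1 p.2.2.2.1

variable {q N : ℕ} [NeZero q] [NeZero N]

lemma Fmap_injective (𝒥 : Set (List (Fin q))) (hno : NonOverlapping 𝒥)
    (h n : ℕ) (hh : 2 ≤ h) (hnN : n ≤ N)
    (hlen : ∀ w ∈ 𝒥, h ≤ w.length ∧ w.length ≤ n) :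
    Function.Injective (Fmap q N 𝒥 h n) := by
  have hb : ∀ (w : List (Fin q)), w ∈ 𝒥 → 2 ≤ w.length ∧ w.length ≤ N := by
    intro w hw
    have := hlen w hw
    omega
  intro x y hxy
  rcases x with _ | ⟨i, c, j, u⟩ <;> rcases y with _ | ⟨i', c', j', u'⟩
  · rfl
  · exfalso
    simp only [Fmap] at hxy
    exact fill_ne_zero hno c'.2.1 (hb _ c'.2.1).1 (hb _ c'.2.1).2 j' u'.1 hxy.symm
  · exfalso
    simp only [Fmap] at hxy
    exact fill_ne_zero hno c.2.1 (hb _ c.2.1).1 (hb _ c.2.1).2 j u.1 hxy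
  · simp only [Fmap] at hxy
    obtain ⟨h1, h2, h3⟩ := fill_inj hno c.2.1 c'.2.1
      (hb _ c.2.1).1 (hb _ c.2.1).2 (hb _ c'.2.1).1 (hb _ c'.2.1).2
      (by rw [c.2.2]; exact u.2.1) (by rw [c'.2.2]; exact u'.2.1) u'.2.2 hxy
    have hii : i = i' := by
      apply Subtype.ext
      rw [← c.2.2, ← c'.2.2, h1]
    subst hii
    obtain rfl : c = c' := Subtype.ext h1
    obtain rfl : j = j' := h2
    obtain rfl : u = u' := Subtype.ext h3
    rfl

lemma card_ECode (𝒥 : Set (List (Fin q))) (h n : ℕ) :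
    Nat.card (ECode q N 𝒥 h n) =
      ∑ i ∈ Finset.Icc h n, Nat.card {w : List (Fin q) // w ∈ 𝒥 ∧ w.length = i} *
        (N * Nat.card {w : List (Fin q) // w.length = N - i ∧ ¬ ∃ c ∈ 𝒥, c <:+: w}) := by
  classical
  haveI := fun i : ℕ => finite_J 𝒥 i
  haveI := fun L : ℕ => finite_A 𝒥 L
  unfold ECode
  rw [aux_card_sigma]
  rw [← Finset.sum_coe_sort (Finset.Icc h n) (fun i =>
    Nat.card {w : List (Fin q) // w ∈ 𝒥 ∧ w.length = i} *
      (N * Nat.card {w : List (Fin q) // w.length = N - i ∧ ¬ ∃ c ∈ 𝒥, c <:+: w}))]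
  apply Finset.sum_congr rfl
  intro i _
  rw [Nat.card_prod, Nat.card_prod]
  have hN : Nat.card (Fin N) = N := by simp [Nat.card_eq_fintype_card]
  rw [hN]

/-- The key counting bound. -/
lemma main_count (𝒥 : Set (List (Fin q))) (hno : NonOverlapping 𝒥)
    (h n : ℕ) (hh : 2 ≤ h) (hnN : n ≤ N)
    (hlen : ∀ w ∈ 𝒥, h ≤ w.length ∧ w.length ≤ n) :
    (∑ i ∈ Finset.Icc h n, Nat.card {w : List (Fin q) // w ∈ 𝒥 ∧ w.length = i} *
        (N * Nat.card {w : List (Fin q) // w.length = N - i ∧ ¬ ∃ c ∈ 𝒥, c <:+: w})) + 1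
      ≤ q ^ N := by
  have h1 : Nat.card (Option (ECode q N 𝒥 h n)) ≤ Nat.card (Fin N → Fin q) :=
    Nat.card_le_card_of_injective _ (Fmap_injective 𝒥 hno h n hh hnN hlen)
  have h2 : Nat.card (Fin N → Fin q) = q ^ N := by
    simp [Nat.card_eq_fintype_card]
  have h3 : Nat.card (Option (ECode q N 𝒥 h n)) = Nat.card (ECode q N 𝒥 h n) + 1 :=
    aux_card_option _
  rw [h3, h2, card_ECode] at h1
  exact h1

end Stmt16Aux

theorem stmt16 (q h n : ℕ) (hq : 2 ≤ q) (hh : 2 ≤ h) (hhn : h ≤ n)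
    (𝒥 : Set (List (Fin q))) (h𝒥 : 𝒥.Nonempty)
    (hlen : ∀ w ∈ 𝒥, h ≤ w.length ∧ w.length ≤ n)
    (hno : NonOverlapping 𝒥)
    (Jc : ℕ → ℕ) (hJc : ∀ i : ℕ, Jc i = Nat.card {w : List (Fin q) // w ∈ 𝒥 ∧ w.length = i})
    (b : ℕ → ℕ)
    (hbcard : ∀ m : ℕ, b m = Nat.card {w : List (Fin q) //
      w.length = m ∧ ¬ ∃ c ∈ 𝒥, c <:+: w}) :
    ∀ m : ℕ, 1 ≤ m → m < h →
      (Jc n : ℝ) < (q : ℝ) ^ n / (m + n)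
        - (1 / (q : ℝ) ^ m) * ∑ i ∈ Finset.Ico h n, (b (m + n - i) : ℝ) * Jc i := by
  intro m hm1 hmh
  haveI : NeZero q := ⟨by omega⟩
  haveI : NeZero (m + n) := ⟨by omega⟩
  -- the integer counting bound
  have key := Stmt16Aux.main_count (N := m + n) 𝒥 hno h n hh (by omega) hlen
  have key2 : (∑ i ∈ Finset.Icc h n, Jc i * ((m + n) * b (m + n - i))) + 1 ≤ q ^ (m + n) := by
    have hcongr : ∑ i ∈ Finset.Icc h n, Jc i * ((m + n) * b (m + n - i)) =
        ∑ i ∈ Finset.Icc h n, Nat.card {w : List (Fin q) // w ∈ 𝒥 ∧ w.length = i} *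
          ((m + n) * Nat.card {w : List (Fin q) //
            w.length = m + n - i ∧ ¬ ∃ c ∈ 𝒥, c <:+: w}) :=
      Finset.sum_congr rfl (fun i _ => by rw [hJc, hbcard])
    rw [hcongr]
    exact key
  -- b m = q ^ m since `m < h`
  have hbm : b m = q ^ m := by
    rw [hbcard m]
    have e : {w : List (Fin q) // w.length = m ∧ ¬ ∃ c ∈ 𝒥, c <:+: w} ≃
        {w : List (Fin q) // w.length = m} := by
      apply Equiv.subtypeEquivRight
      intro w
      constructor
      · exact fun hw => hw.1
      · intro hw
        refine ⟨hw, ?_⟩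
        rintro ⟨c, hc, hinf⟩
        have h1 := hinf.length_le
        have h2 := (hlen c hc).1
        omega
    rw [Nat.card_congr e, Stmt16Aux.aux_card_len, Fintype.card_fin]
  -- split off the top term `i = n`
  have key3 : (∑ i ∈ Finset.Ico h n, Jc i * ((m + n) * b (m + n - i)))
      + Jc n * ((m + n) * q ^ m) + 1 ≤ q ^ (m + n) := by
    rw [← Finset.Ico_add_one_right_eq_Icc, Finset.sum_Ico_succ_top hhn] at key2
    have : m + n - n = m := by omega
    rw [this, hbm] at key2
    omega
  -- pass to the reals
  have hqR : (0 : ℝ) < (q : ℝ) ^ m := by positivity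
  have hMN : (0 : ℝ) < (m : ℝ) + (n : ℝ) := by positivity
  have keyR : (∑ i ∈ Finset.Ico h n, (Jc i : ℝ) * (((m : ℝ) + n) * (b (m + n - i) : ℝ)))
      + (Jc n : ℝ) * (((m : ℝ) + n) * (q : ℝ) ^ m) + 1 ≤ (q : ℝ) ^ (m + n) := by
    exact_mod_cast key3
  have hsumEq : ∑ i ∈ Finset.Ico h n, (Jc i : ℝ) * (((m : ℝ) + n) * (b (m + n - i) : ℝ))
      = ((m : ℝ) + n) * ∑ i ∈ Finset.Ico h n, (b (m + n - i) : ℝ) * (Jc i : ℝ) := by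
    rw [Finset.mul_sum]
    exact Finset.sum_congr rfl (fun i _ => by ring)
  rw [hsumEq] at keyR
  rw [lt_sub_iff_add_lt, lt_div_iff₀ hMN]
  have hexp : ((Jc n : ℝ) + 1 / (q : ℝ) ^ m *
      ∑ i ∈ Finset.Ico h n, (b (m + n - i) : ℝ) * (Jc i : ℝ)) * ((m : ℝ) + n) =
      ((Jc n : ℝ) * (((m : ℝ) + n) * (q : ℝ) ^ m) +
        ((m : ℝ) + n) * ∑ i ∈ Finset.Ico h n, (b (m + n - i) : ℝ) * (Jc i : ℝ)) / (q : ℝ) ^ m := by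
    field_simp
  rw [hexp, div_lt_iff₀ hqR]
  have hpow : (q : ℝ) ^ (m + n) = (q : ℝ) ^ n * (q : ℝ) ^ m := by
    rw [← pow_add]
    ring_nf
  linarith [keyR, hpow]
end

section
/- Any fixed-length non-overlapping code S \subseteq \mathbb{Z}_q^n (with n, q \ge 2) satisfies |S| < q^n/(2n-1). -/
/-- Any fixed-length non-overlapping code `S ⊆ ℤ_qⁿ` (with `n, q ≥ 2`)
satisfies `|S| < qⁿ/(2n-1)`. Non-overlapping: for all `u, v ∈ S`, no nonempty proper
prefix of `u` equals a nonempty proper suffix of `v` (including `u = v`). -/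
theorem stmt17 (q n : ℕ) (hq : 2 ≤ q) (hn : 2 ≤ n)
    (S : Set (List (Fin q))) (hlen : ∀ w ∈ S, w.length = n)
    (hno : ∀ u ∈ S, ∀ v ∈ S, ∀ p : List (Fin q),
      p ≠ [] → p ≠ u → p ≠ v → p <+: u → ¬ p <:+ v) :
    (Nat.card S : ℝ) < (q : ℝ) ^ n / (2 * n - 1) := by
  classical
  haveI : NeZero q := ⟨by omega⟩
  set L := 2 * n - 1 with hLdef
  haveI : NeZero L := ⟨by omega⟩
  have hnL : n ≤ L := by omega
  -- occurrence predicate on cyclic words of length L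
  let Occ : (ZMod L → Fin q) → List (Fin q) → ZMod L → Prop :=
    fun c w i => ∀ k : ℕ, k < n → c (i + (k : ZMod L)) = w.getD k 0
  -- Lemma A: overlapping occurrences of two codewords are impossible
  have lemA : ∀ w ∈ S, ∀ w' ∈ S, ∀ (c : ZMod L → Fin q) (i : ZMod L) (e : ℕ),
      Occ c w i → Occ c w' (i + (e : ZMod L)) → 0 < e → e < n → False := by
    intro w hw w' hw' c i e h1 h2 he0 hen
    have hwlen : w.length = n := hlen w hw
    have hw'len : w'.length = n := hlen w' hw'
    have hp : w.drop e = w'.take (n - e) := by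
      apply List.ext_getElem
      · simp [hwlen, hw'len]
      · intro k hk1 hk2
        have hk : k < n - e := by simpa [hwlen] using hk1
        have e1 := h1 (e + k) (by omega)
        have e2 := h2 k (by omega)
        have hx : i + ((e + k : ℕ) : ZMod L) = i + (e : ZMod L) + (k : ZMod L) := by
          push_cast; ring
        rw [hx] at e1
        have heq : w.getD (e + k) 0 = w'.getD k 0 := by rw [← e1, e2]
        rw [List.getD_eq_getElem w 0 (by omega), List.getD_eq_getElem w' 0 (by omega)] at heq
        simpa [List.getElem_drop, List.getElem_take] using heq
    have hlen1 : (w.drop e).length = n - e := by simp [hwlen]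
    have hpw : w.drop e ≠ w := by
      intro h; have := congrArg List.length h; rw [hlen1, hwlen] at this; omega
    have hpw' : w.drop e ≠ w' := by
      intro h; have := congrArg List.length h; rw [hlen1, hw'len] at this; omega
    have hpnil : w.drop e ≠ [] := by
      intro h; have := congrArg List.length h; rw [hlen1] at this; simp at this; omega
    exact hno w' hw' w hw (w.drop e) hpnil hpw' hpw (hp ▸ List.take_prefix _ _)
      (List.drop_suffix _ _)
  -- Lemma B: at most one occurrence in a cyclic word
  have lemB : ∀ w ∈ S, ∀ w' ∈ S, ∀ (c : ZMod L → Fin q) (i j : ZMod L),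
      Occ c w i → Occ c w' j → w = w' ∧ i = j := by
    intro w hw w' hw' c i j h1 h2
    have hij : i = j := by
      by_contra hne
      set d := (j - i).val with hd
      have hd0 : 0 < d := by
        rcases Nat.eq_zero_or_pos d with h | h
        · exfalso
          apply hne
          have h0 : j - i = 0 := (ZMod.val_eq_zero _).mp h
          exact (sub_eq_zero.mp h0).symm
        · exact h
      have hdL : d < L := ZMod.val_lt _
      have hji : j = i + (d : ZMod L) := by
        have : ((d : ℕ) : ZMod L) = j - i := ZMod.natCast_rightInverse _
        rw [this]; ring
      rcases lt_or_ge d n with hdn | hdn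
      · exact lemA w hw w' hw' c i d h1 (hji ▸ h2) hd0 hdn
      · have he0 : 0 < L - d := by omega
        have hen : L - d < n := by omega
        have hi : i = j + ((L - d : ℕ) : ZMod L) := by
          have hc : ((d : ℕ) : ZMod L) + ((L - d : ℕ) : ZMod L) = 0 := by
            rw [← Nat.cast_add]
            have : d + (L - d) = L := by omega
            rw [this, ZMod.natCast_self]
          rw [hji]
          rw [add_assoc, hc, add_zero]
        exact lemA w' hw' w hw c j (L - d) h2 (hi ▸ h1) he0 hen
    subst hij
    have hwlen : w.length = n := hlen w hw
    have hw'len : w'.length = n := hlen w' hw'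
    refine ⟨List.ext_getElem (by rw [hwlen, hw'len]) ?_, rfl⟩
    intro k hk1 hk2
    have e1 := h1 k (by omega)
    have e2 := h2 k (by omega)
    rw [List.getD_eq_getElem w 0 (by omega)] at e1
    rw [List.getD_eq_getElem w' 0 (by omega)] at e2
    rw [← e1, ← e2]
  -- the encoding map
  have hvlt : ∀ x : ZMod L, x.val < L := fun x => ZMod.val_lt x
  let D := S × ZMod L × (Fin (n - 1) → Fin q)
  let F : D → (ZMod L → Fin q) := fun a x =>
    if h : (x - a.2.1).val < n then (a.1 : List (Fin q)).getD (x - a.2.1).val 0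
    else a.2.2 ⟨(x - a.2.1).val - n, by have := hvlt (x - a.2.1); omega⟩
  have hFocc : ∀ a : D, Occ (F a) (a.1 : List (Fin q)) a.2.1 := by
    intro a k hk
    have hx : a.2.1 + (k : ZMod L) - a.2.1 = (k : ZMod L) := by ring
    have hval : ((k : ZMod L)).val = k := by
      rw [ZMod.val_natCast]; exact Nat.mod_eq_of_lt (by omega)
    show F a (a.2.1 + (k : ZMod L)) = _
    simp only [F, hx, hval, hk, dif_pos]
  have hFne : ∀ a : D, F a ≠ fun _ => (0 : Fin q) := by
    intro a h
    obtain ⟨⟨w, hw⟩, i, f⟩ := a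
    have hwlen : w.length = n := hlen w hw
    have h0 : w.getD 0 0 = 0 := by
      have := hFocc ⟨⟨w, hw⟩, i, f⟩ 0 (by omega)
      rw [h] at this; exact this.symm
    have h1 : w.getD (n - 1) 0 = 0 := by
      have := hFocc ⟨⟨w, hw⟩, i, f⟩ (n - 1) (by omega)
      rw [h] at this; exact this.symm
    rw [List.getD_eq_getElem w 0 (by omega)] at h0
    rw [List.getD_eq_getElem w 0 (by omega)] at h1
    have hpre : [(0 : Fin q)] <+: w := by
      have : [(0 : Fin q)] = w.take 1 := by
        apply List.ext_getElem
        · simp [hwlen]; omega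
        · intro k hk1 hk2
          have hk0 : k = 0 := by simp at hk1; omega
          subst hk0
          simpa [List.getElem_take] using h0.symm
      exact this ▸ List.take_prefix _ _
    have hsuf : [(0 : Fin q)] <:+ w := by
      have : [(0 : Fin q)] = w.drop (n - 1) := by
        apply List.ext_getElem
        · simp [hwlen]; omega
        · intro k hk1 hk2
          have hk0 : k = 0 := by simp at hk1; omega
          subst hk0
          simp only [List.getElem_drop]
          simpa using h1.symm
      exact this ▸ List.drop_suffix _ _
    exact hno w hw w hw [(0 : Fin q)] (by simp)
      (by intro hc; have := congrArg List.length hc; simp [hwlen] at this; omega)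
      (by intro hc; have := congrArg List.length hc; simp [hwlen] at this; omega)
      hpre hsuf
  have hFinj : Function.Injective F := by
    rintro ⟨⟨w, hw⟩, i, f⟩ ⟨⟨w', hw'⟩, j, f'⟩ h
    have o1 := hFocc ⟨⟨w, hw⟩, i, f⟩
    have o2 := hFocc ⟨⟨w', hw'⟩, j, f'⟩
    rw [h] at o1
    obtain ⟨hww, hij⟩ := lemB w hw w' hw' _ i j o1 o2
    subst hww; subst hij
    have hf : f = f' := by
      funext m
      have hc := congrFun h (i + ((n + m.val : ℕ) : ZMod L))
      have hx : i + ((n + m.val : ℕ) : ZMod L) - i = ((n + m.val : ℕ) : ZMod L) := by ring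
      have hval : (((n + m.val : ℕ) : ZMod L)).val = n + m.val := by
        rw [ZMod.val_natCast]; exact Nat.mod_eq_of_lt (by have := m.isLt; omega)
      have hge : ¬ (n + m.val < n) := by omega
      simp only [F, hx, hval, hge, dif_neg, not_false_iff] at hc
      have hm : n + m.val - n = m.val := by omega
      simpa [hm] using hc
    rw [hf]
  -- counting
  have hSfin : S.Finite := (List.finite_length_eq (Fin q) n).subset (fun w hw => hlen w hw)
  haveI := hSfin.fintype
  haveI : Finite S := hSfin.to_subtype
  have hlt : Fintype.card D < Fintype.card (ZMod L → Fin q) := by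
    apply Fintype.card_lt_of_injective_of_notMem F hFinj (b := fun _ => (0 : Fin q))
    rintro ⟨a, ha⟩
    exact hFne a ha
  have hcardD : Fintype.card D = Nat.card S * (L * q ^ (n - 1)) := by
    simp [D, Fintype.card_prod, Fintype.card_fun, ZMod.card, Nat.card_eq_fintype_card]
  have hcardT : Fintype.card (ZMod L → Fin q) = q ^ n * q ^ (n - 1) := by
    rw [Fintype.card_fun, ZMod.card, Fintype.card_fin, ← pow_add]
    congr 1; omega
  have key : Nat.card S * L < q ^ n := by
    have h1 : Nat.card S * L * q ^ (n - 1) < q ^ n * q ^ (n - 1) := by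
      calc Nat.card S * L * q ^ (n - 1) = Fintype.card D := by rw [hcardD]; ring
        _ < Fintype.card (ZMod L → Fin q) := hlt
        _ = q ^ n * q ^ (n - 1) := hcardT
    exact Nat.lt_of_mul_lt_mul_right h1
  have h2 : (0 : ℝ) < 2 * n - 1 := by
    have : (2 : ℝ) ≤ (n : ℝ) := by exact_mod_cast hn
    linarith
  rw [lt_div_iff₀ h2]
  have hcast : ((Nat.card S * L : ℕ) : ℝ) < ((q ^ n : ℕ) : ℝ) := by exact_mod_cast key
  have hLcast : ((L : ℕ) : ℝ) = 2 * (n : ℝ) - 1 := by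
    rw [hLdef]
    have h1n : (1 : ℕ) ≤ 2 * n := by omega
    push_cast [Nat.cast_sub h1n]
    ring
  push_cast at hcast
  rw [hLcast] at hcast
  exact hcast
end

section
/- The q-ary code V_{I,J}^{(k)}(n) = J^k \times R^{(k)}(n-2k) \times I^k, together with the union \mathcal{V}_{I,J}^{(k)}(n) = \bigcup_{i=2k+2}^{n} V_{I,J}^{(k)}(i), is a variable-length non-overlapping code: no nonempty proper prefix of any codeword equals a nonempty proper suffix of any codeword, and no codeword contains another codeword as a subword. -/
lemma slice_getD {α : Type*} (w : List α) (d : α) (a b j : ℕ) (hj : j < b)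
    (hb : a + b ≤ w.length) :
    ((w.drop a).take b).getD j d = w.getD (a + j) d := by
  have h1 : j < ((w.drop a).take b).length := by
    simp [List.length_take, List.length_drop]; omega
  have h2 : a + j < w.length := by omega
  rw [List.getD_eq_getElem _ _ h1, List.getD_eq_getElem _ _ h2, List.getElem_take,
    List.getElem_drop]

lemma extract {q k : ℕ} (hk : 3 ≤ k) {I J : Set (Fin q)} {d : Fin q}
    (w : List (Fin q)) (h1 : 2 * k + 2 ≤ w.length)
    (h3 : ∀ x ∈ w.take k, x ∈ J)
    (h4 : ∀ x ∈ w.drop (w.length - k), x ∈ I)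
    (h5 : ((w.drop k).take (w.length - 2 * k)).getD 0 d ∈ I)
    (h6 : ((w.drop k).take (w.length - 2 * k)).getD (w.length - 2 * k - 1) d ∈ J)
    (h7 : ¬ ∃ v : List (Fin q), v.length = k ∧ (∀ a ∈ v, a ∈ I) ∧
      v <:+: (w.drop k).take (w.length - 2 * k))
    (h8 : ¬ ∃ v : List (Fin q), v.length = k ∧ (∀ a ∈ v, a ∈ J) ∧
      v <:+: (w.drop k).take (w.length - 2 * k)) :
    (∀ i, i < k → w.getD i d ∈ J) ∧
    (∀ i, w.length - k ≤ i → i < w.length → w.getD i d ∈ I) ∧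
    w.getD k d ∈ I ∧
    w.getD (w.length - k - 1) d ∈ J ∧
    (∀ a, k ≤ a → a + k + k ≤ w.length → ¬ ∀ j, j < k → w.getD (a + j) d ∈ I) ∧
    (∀ a, k ≤ a → a + k + k ≤ w.length → ¬ ∀ j, j < k → w.getD (a + j) d ∈ J) := by
  have noRun : ∀ (K : Set (Fin q)),
      (¬ ∃ v : List (Fin q), v.length = k ∧ (∀ a ∈ v, a ∈ K) ∧
        v <:+: (w.drop k).take (w.length - 2 * k)) →
      ∀ a, k ≤ a → a + k + k ≤ w.length → ¬ ∀ j, j < k → w.getD (a + j) d ∈ K := by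
    intro K hK a ha hak hc
    apply hK
    refine ⟨(((w.drop k).take (w.length - 2 * k)).drop (a - k)).take k, ?_, ?_, ?_⟩
    · simp only [List.length_take, List.length_drop]
      omega
    · intro x hx
      obtain ⟨j, hj, rfl⟩ := List.mem_iff_getElem.mp hx
      have hjk : j < k := by
        have := hj
        simp only [List.length_take, List.length_drop] at this
        omega
      rw [← List.getD_eq_getElem _ d hj]
      rw [slice_getD _ d (a - k) k j hjk
        (by simp only [List.length_take, List.length_drop]; omega)]
      rw [slice_getD w d k (w.length - 2 * k) ((a - k) + j) (by omega) (by omega)]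
      rw [show k + (a - k + j) = a + j from by omega]
      exact hc j hjk
    · exact List.infix_iff_prefix_suffix.mpr ⟨_, List.take_prefix _ _, List.drop_suffix _ _⟩
  refine ⟨?_, ?_, ?_, ?_, noRun I h7, noRun J h8⟩
  · intro i hik
    have hi : i < w.length := by omega
    rw [List.getD_eq_getElem _ _ hi]
    apply h3
    have hlt : i < (w.take k).length := by simp [List.length_take]; omega
    have hmem := List.getElem_mem hlt
    rwa [List.getElem_take] at hmem
  · intro i h1i h2i
    rw [List.getD_eq_getElem _ _ h2i]
    apply h4
    have hlt : i - (w.length - k) < (w.drop (w.length - k)).length := by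
      simp [List.length_drop]; omega
    have hmem := List.getElem_mem hlt
    rw [List.getElem_drop] at hmem
    simp only [show w.length - k + (i - (w.length - k)) = i from by omega] at hmem
    exact hmem
  · have h := h5
    rw [slice_getD w d k (w.length - 2 * k) 0 (by omega) (by omega)] at h
    simpa using h
  · have h := h6
    rw [slice_getD w d k (w.length - 2 * k) (w.length - 2 * k - 1) (by omega) (by omega)] at h
    rwa [show k + (w.length - 2 * k - 1) = w.length - k - 1 from by omega] at h

/-- The `q`-ary code `𝒱_{I,J}^{(k)}(n) = ⋃_{i=2k+2}^n V_{I,J}^{(k)}(i)`,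
where `V_{I,J}^{(k)}(i) = J^k × R^{(k)}(i-2k) × I^k` and `R^{(k)}(l)` is the set of
words of length `l` starting in `I`, ending in `J`, with no `k` consecutive letters
from `I` and no `k` consecutive letters from `J`, is a variable-length
non-overlapping code. -/
theorem stmt18 (q n k : ℕ) (hq : 2 ≤ q) (hk : 3 ≤ k) (hkn : k ≤ n / 2 - 2)
    (I J : Set (Fin q)) (hI : I.Nonempty) (hJ : J.Nonempty)
    (hd : Disjoint I J) (hu : I ∪ J = Set.univ) :
    NonOverlapping {w : List (Fin q) |
      2 * k + 2 ≤ w.length ∧ w.length ≤ n ∧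
      (∀ x ∈ w.take k, x ∈ J) ∧
      (∀ x ∈ w.drop (w.length - k), x ∈ I) ∧
      ((w.drop k).take (w.length - 2 * k)).getD 0 ⟨0, by omega⟩ ∈ I ∧
      ((w.drop k).take (w.length - 2 * k)).getD (w.length - 2 * k - 1) ⟨0, by omega⟩ ∈ J ∧
      (¬ ∃ v : List (Fin q), v.length = k ∧ (∀ a ∈ v, a ∈ I) ∧
        v <:+: (w.drop k).take (w.length - 2 * k)) ∧
      (¬ ∃ v : List (Fin q), v.length = k ∧ (∀ a ∈ v, a ∈ J) ∧
        v <:+: (w.drop k).take (w.length - 2 * k))} := by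
  set d : Fin q := ⟨0, by omega⟩ with hdd
  constructor
  · -- prefix/suffix condition
    intro u hu' v hv' p hpne hpu hpv hpre hsuf
    obtain ⟨hu1, hu2, hu3, hu4, hu5, hu6, hu7, hu8⟩ := hu'
    obtain ⟨hv1, hv2, hv3, hv4, hv5, hv6, hv7, hv8⟩ := hv'
    obtain ⟨uJ, uI, um0, umlast, unoI, unoJ⟩ :=
      extract hk (d := d) u hu1 hu3 hu4 hu5 hu6 hu7 hu8
    obtain ⟨vJ, vI, vm0, vmlast, vnoI, vnoJ⟩ :=
      extract hk (d := d) v hv1 hv3 hv4 hv5 hv6 hv7 hv8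
    have hp0 : 0 < p.length := List.length_pos_iff.mpr hpne
    have hlpu : p.length ≤ u.length := hpre.length_le
    have hlpv : p.length < v.length :=
      lt_of_le_of_ne hsuf.length_le (fun h => hpv (hsuf.eq_of_length h))
    have hpreD : ∀ j, j < p.length → p.getD j d = u.getD j d := by
      obtain ⟨t, ht⟩ := hpre
      intro j hj
      rw [← ht, List.getD_eq_getElem _ _ hj,
        List.getD_eq_getElem _ _ (show j < (p ++ t).length by simp; omega),
        List.getElem_append_left hj]
    have hsufD : ∀ j, j < p.length → p.getD j d = v.getD (v.length - p.length + j) d := by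
      obtain ⟨t, ht⟩ := hsuf
      have htl : t.length = v.length - p.length := by rw [← ht]; simp
      have key : ∀ j, j < p.length → v.getD (t.length + j) d = p.getD j d := by
        intro j hj
        rw [← ht, List.getD_eq_getElem _ _ hj,
          List.getD_eq_getElem _ _ (show t.length + j < (t ++ p).length by simp; omega),
          List.getElem_append_right (Nat.le_add_right _ _)]
        congr 1
        omega
      intro j hj
      rw [show v.length - p.length + j = t.length + j from by omega, key j hj]
    rcases le_or_gt p.length k with hcase | hcase
    · have h0u : p.getD 0 d ∈ J := by
        rw [hpreD 0 hp0]; exact uJ 0 (by omega)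
      have h0v : p.getD 0 d ∈ I := by
        rw [hsufD 0 hp0]
        exact vI _ (by omega) (by omega)
      exact (Set.disjoint_left.mp hd h0v) h0u
    · have hrun : ∀ j, j < k → v.getD (v.length - p.length + j) d ∈ J := by
        intro j hj
        rw [← hsufD j (by omega), hpreD j (by omega)]
        exact uJ j hj
      rcases le_or_gt (v.length - p.length) k with h1 | h1
      · have h := hrun (k - (v.length - p.length)) (by omega)
        rw [show v.length - p.length + (k - (v.length - p.length)) = k from by omega] at h
        exact (Set.disjoint_left.mp hd vm0) h
      · rcases le_or_gt ((v.length - p.length) + k + k) v.length with h2 | h2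
        · exact vnoJ (v.length - p.length) (by omega) h2 (fun j hj => hrun j hj)
        · have h := hrun (v.length - k - (v.length - p.length)) (by omega)
          rw [show v.length - p.length + (v.length - k - (v.length - p.length))
              = v.length - k from by omega] at h
          exact (Set.disjoint_left.mp hd (vI _ (by omega) (by omega))) h
  · -- infix condition
    intro u hu' v hv' hne hinf
    obtain ⟨hu1, hu2, hu3, hu4, hu5, hu6, hu7, hu8⟩ := hu'
    obtain ⟨hv1, hv2, hv3, hv4, hv5, hv6, hv7, hv8⟩ := hv'
    obtain ⟨uJ, uI, um0, umlast, unoI, unoJ⟩ :=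
      extract hk (d := d) u hu1 hu3 hu4 hu5 hu6 hu7 hu8
    obtain ⟨vJ, vI, vm0, vmlast, vnoI, vnoJ⟩ :=
      extract hk (d := d) v hv1 hv3 hv4 hv5 hv6 hv7 hv8
    have hlv : v.length < u.length :=
      lt_of_le_of_ne hinf.length_le (fun h => hne (hinf.eq_of_length h).symm)
    obtain ⟨s, t, hst⟩ := hinf
    have ha : s.length + v.length ≤ u.length := by
      have : u.length = s.length + (v.length + t.length) := by
        rw [← hst]; simp
      omega
    have hvtake : (u.drop s.length).take v.length = v := by
      rw [← hst, List.append_assoc, List.drop_left, List.take_left]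
    have hvD : ∀ j, j < v.length → v.getD j d = u.getD (s.length + j) d := by
      intro j hj
      rw [← hvtake]
      exact slice_getD u d s.length v.length j hj (by omega)
    have hJrun : ∀ j, j < k → u.getD (s.length + j) d ∈ J := by
      intro j hj
      rw [← hvD j (by omega)]
      exact vJ j hj
    have hIrun : ∀ j, j < k → u.getD (s.length + (v.length - k) + j) d ∈ I := by
      intro j hj
      rw [show s.length + (v.length - k) + j = s.length + ((v.length - k) + j) from by omega,
        ← hvD _ (by omega)]
      exact vI _ (by omega) (by omega)
    have hs0 : s.length = 0 := by
      by_contra h0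
      rcases le_or_gt s.length k with h1 | h1
      · have h := hJrun (k - s.length) (by omega)
        rw [show s.length + (k - s.length) = k from by omega] at h
        exact (Set.disjoint_left.mp hd um0) h
      · rcases le_or_gt (s.length + k + k) u.length with h2 | h2
        · exact unoJ s.length (by omega) h2 (fun j hj => hJrun j hj)
        · have h := hJrun (u.length - k - s.length) (by omega)
          rw [show s.length + (u.length - k - s.length) = u.length - k from by omega] at h
          exact (Set.disjoint_left.mp hd (uI _ (by omega) (by omega))) h
    rcases le_or_gt (v.length + k) u.length with h2 | h2
    · refine unoI (v.length - k) (by omega) (by omega) (fun j hj => ?_)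
      have h := hIrun j hj
      rwa [hs0, show 0 + (v.length - k) + j = (v.length - k) + j from by omega] at h
    · have h := hIrun (u.length - v.length - 1) (by omega)
      rw [hs0, show 0 + (v.length - k) + (u.length - v.length - 1)
          = u.length - k - 1 from by omega] at h
      exact (Set.disjoint_left.mp hd h) umlast
end

section
/- For a non-overlapping code \mathcal{J} = \bigcup_{i=h}^n J(i) over \mathbb{Z}_q and 1 \le m < h, the number of words of length m+n over \mathbb{Z}_q that contain exactly one occurrence of a codeword from \mathcal{J} as a cyclic subword equals \sum_{i=h}^{n} (m+n) \cdot b(m+n-i) \cdot |J(i)|, where b(j) counts length-j words avoiding all codewords of \mathcal{J} as (linear) subwords. -/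
private lemma modAux1 {L p p' : ℕ} (hp : p < L) (hp' : p' < L) :
    (L - p + p') % L = 0 ↔ p' = p := by
  rcases le_or_gt p p' with hle | hlt
  · have h1 : L - p + p' = L + (p' - p) := by omega
    rw [h1, Nat.add_mod_left, Nat.mod_eq_of_lt (by omega)]
    omega
  · rw [Nat.mod_eq_of_lt (by omega)]
    omega

private lemma modAux2 {L p s : ℕ} (hp : p < L) (hs : s < L) (h0 : 0 < s) :
    (p + s) % L ≠ p := by
  rcases Nat.lt_or_ge (p + s) L with h | h
  · rw [Nat.mod_eq_of_lt h]; omega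
  · have h2 : (p + s) % L = p + s - L := by
      rw [Nat.mod_eq_sub_mod h, Nat.mod_eq_of_lt (by omega)]
    omega

private lemma takeDropInfix {α : Type*} (l : List α) (a b : ℕ) :
    (l.drop a).take b <:+: l :=
  ((List.take_prefix _ _).isInfix).trans (List.drop_suffix _ _).isInfix

/-- Uniqueness of the codeword at a given position. -/
private lemma keyUniq {α : Type*} {S : Set (List α)} (hno : NonOverlapping S)
    {c v c' : List α} (hc : c ∈ S) (hc' : c' ∈ S)
    (h : (c ++ v).take c'.length = c') : c' = c := by
  have h1 : c' <+: c ++ v := h ▸ List.take_prefix _ _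
  have h2 : c <+: c ++ v := List.prefix_append _ _
  by_contra hne
  rcases le_or_gt c'.length c.length with hl | hl
  · exact hno.2 c hc c' hc' (Ne.symm hne)
      (List.prefix_of_prefix_length_le h1 h2 hl).isInfix
  · exact hno.2 c' hc' c hc hne
      (List.prefix_of_prefix_length_le h2 h1 hl.le).isInfix

/-- The central lemma: a cyclic occurrence in `c ++ v` (with `v` free) must be at 0. -/
private lemma keyOcc {α : Type*} {S : Set (List α)} (hno : NonOverlapping S) {L : ℕ}
    (hlenS : ∀ w ∈ S, 1 ≤ w.length ∧ w.length < L)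
    {c v : List α} (hc : c ∈ S) (hfree : ¬ ∃ x ∈ S, x <:+: v)
    (hlcv : c.length + v.length = L)
    {s : ℕ} (hs : s < L)
    (hocc : ∃ c' ∈ S, ((c ++ v).rotate s).take c'.length = c') :
    s = 0 := by
  by_contra hs0
  obtain ⟨c', hc', heq⟩ := hocc
  have hul : (c ++ v).length = L := by simp [hlcv]
  have hi := hlenS c hc
  have hℓ := hlenS c' hc'
  have hrot : (c ++ v).rotate s = (c ++ v).drop s ++ (c ++ v).take s :=
    List.rotate_eq_drop_append_take (by omega)
  rw [hrot] at heq
  have hdl : ((c ++ v).drop s).length = L - s := by simp [hul]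
  have htl : ((c ++ v).take s).length = s := by simp [hul]; omega
  rcases le_or_gt (s + c'.length) L with hA | hB
  · -- no wrap-around
    have heq2 : ((c ++ v).drop s).take c'.length = c' := by
      rw [List.take_append_of_le_length (by omega)] at heq; exact heq
    rcases le_or_gt c.length s with hA2 | hlt
    · -- occurrence inside v
      have hds : (c ++ v).drop s = v.drop (s - c.length) := by
        rw [List.drop_append, List.drop_eq_nil_of_le hA2, List.nil_append]
      rw [hds] at heq2
      exact hfree ⟨c', hc', heq2 ▸ takeDropInfix v _ _⟩
    · have hds : (c ++ v).drop s = c.drop s ++ v := by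
        rw [List.drop_append, Nat.sub_eq_zero_of_le hlt.le, List.drop_zero]
      rcases le_or_gt (s + c'.length) c.length with hA1 | hA3
      · -- occurrence strictly inside c
        have heq3 : (c.drop s).take c'.length = c' := by
          rw [hds, List.take_append_of_le_length (by simp; omega)] at heq2; exact heq2
        have hne : c ≠ c' := by
          intro hcc
          have := congrArg List.length hcc
          omega
        exact hno.2 c hc c' hc' hne (heq3 ▸ takeDropInfix c _ _)
      · -- occurrence straddles the boundary of c and v
        have hpd : (c.drop s).length = c.length - s := by simp
        have heq3 : c' = c.drop s ++ v.take (c'.length - (c.length - s)) := by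
          rw [hds, List.take_append,
            List.take_of_length_le (by omega)] at heq2
          simp only [hpd] at heq2 ⊢
          exact heq2.symm
        have hpre : c.drop s <+: c' := heq3 ▸ List.prefix_append _ _
        have hsuf : c.drop s <:+ c := List.drop_suffix _ _
        refine hno.1 c' hc' c hc (c.drop s) ?_ ?_ ?_ hpre hsuf
        · intro hnil
          have := congrArg List.length hnil
          simp at this; omega
        · intro hEq
          have := congrArg List.length hEq
          simp at this; omega
        · intro hEq
          have := congrArg List.length hEq
          simp at this; omega
  · -- wrap-around
    set t := s + c'.length - L with ht
    have ht1 : 1 ≤ t := by omega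
    have hts : t ≤ s := by omega
    have heq2 : c' = (c ++ v).drop s ++ (c ++ v).take t := by
      rw [List.take_append, List.take_of_length_le (by omega),
        List.take_take, hdl] at heq
      have hmin : min (c'.length - (L - s)) s = t := by omega
      rw [hmin] at heq
      exact heq.symm
    have hd0 : (c ++ v).drop s ≠ [] := by
      intro hnil
      have := congrArg List.length hnil
      simp [hdl] at this; omega
    rcases le_or_gt t c.length with hB1 | hB2
    · have htake : (c ++ v).take t = c.take t := List.take_append_of_le_length hB1
      rcases Nat.lt_or_ge t c.length with hB1' | hB1''
      · -- proper prefix of c is a suffix of c'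
        have hpre : c.take t <+: c := List.take_prefix _ _
        have hsuf : c.take t <:+ c' := by
          rw [heq2, htake]; exact List.suffix_append _ _
        refine hno.1 c hc c' hc' (c.take t) ?_ ?_ ?_ hpre hsuf
        · intro hnil
          have h9 := congrArg List.length hnil
          rw [List.length_take] at h9
          simp only [List.length_nil] at h9
          omega
        · intro hEq
          have h9 := congrArg List.length hEq
          rw [List.length_take] at h9
          omega
        · intro hEq
          have h9 := congrArg List.length hEq
          rw [List.length_take] at h9
          omega
      · -- t = c.length : c is a proper suffix of c'
        have htc : t = c.length := by omega
        have hcc' : c <:+: c' := by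
          rw [heq2, htake, htc, List.take_length]
          exact (List.suffix_append _ _).isInfix
        have hne : c' ≠ c := by
          intro hEq
          have := congrArg List.length hEq
          rw [heq2] at this
          simp [hdl] at this
          omega
        exact hno.2 c' hc' c hc hne hcc'
    · -- c is strictly inside c'
      have htake : (c ++ v).take t = c ++ v.take (t - c.length) := by
        rw [List.take_append, List.take_of_length_le (by omega)]
      have hcc' : c <:+: c' := by
        rw [heq2, htake]
        exact ⟨(c ++ v).drop s, v.take (t - c.length), by simp⟩
      have hne : c' ≠ c := by
        intro hEq
        have := congrArg List.length hEq
        omega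
      exact hno.2 c' hc' c hc hne hcc'

/-- Occurrence criterion for the rotated word. -/
private lemma occIff {α : Type*} {S : Set (List α)} (hno : NonOverlapping S) {L : ℕ}
    (hlenS : ∀ w ∈ S, 1 ≤ w.length ∧ w.length < L)
    {c v : List α} (hc : c ∈ S) (hfree : ¬ ∃ x ∈ S, x <:+: v)
    (hlcv : c.length + v.length = L)
    {p p' : ℕ} (hp : p < L) (hp' : p' < L) :
    (∃ c' ∈ S, (((c ++ v).rotate (L - p)).rotate p').take c'.length = c') ↔ p' = p := by
  have hul : (c ++ v).length = L := by simp [hlcv]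
  have hL0 : 0 < L := by omega
  rw [List.rotate_rotate]
  have hmod : (c ++ v).rotate (L - p + p') = (c ++ v).rotate ((L - p + p') % L) := by
    conv_lhs => rw [← List.rotate_mod]
    rw [hul]
  rw [hmod]
  constructor
  · intro hocc
    exact (modAux1 hp hp').mp
      (keyOcc hno hlenS hc hfree hlcv (Nat.mod_lt _ hL0) hocc)
  · intro h
    subst h
    have : (L - p' + p') % L = 0 := by
      have : L - p' + p' = L := by omega
      rw [this, Nat.mod_self]
    rw [this, List.rotate_zero]
    exact ⟨c, hc, by rw [List.take_append_of_le_length le_rfl, List.take_length]⟩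

private lemma finAux {q j : ℕ} (P : List (Fin q) → Prop) :
    Finite {w : List (Fin q) // w.length = j ∧ P w} := by
  have : {w : List (Fin q) | w.length = j ∧ P w} ⊆ {w : List (Fin q) | w.length = j} :=
    fun w hw => hw.1
  exact ((List.finite_length_eq (Fin q) j).subset this).to_subtype

private lemma finAux2 {q j : ℕ} (P : List (Fin q) → Prop) :
    Finite {w : List (Fin q) // P w ∧ w.length = j} := by
  have : {w : List (Fin q) | P w ∧ w.length = j} ⊆ {w : List (Fin q) | w.length = j} :=
    fun w hw => hw.2
  exact ((List.finite_length_eq (Fin q) j).subset this).to_subtype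

/-- For a non-overlapping code `𝒥 = ⋃_{i=h}^n J(i)` over `ℤ_q` and
`1 ≤ m < h`, the number of words of length `m + n` over `ℤ_q` that contain exactly one
occurrence of a codeword from `𝒥` as a cyclic subword equals
`∑_{i=h}^n (m+n)·b (m+n-i)·|J(i)|`, where `b j` counts length-`j` words avoiding all
codewords of `𝒥` as (linear) subwords. A cyclic subword of `w` starting at position `p`
with length `i` is the length-`i` prefix of the rotation of `w` by `p`. -/
theorem stmt19 (q h n m : ℕ) (hq : 2 ≤ q) (hh : 2 ≤ h) (hhn : h ≤ n)
    (hm1 : 1 ≤ m) (hmh : m < h)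
    (𝒥 : Set (List (Fin q))) (hlen : ∀ w ∈ 𝒥, h ≤ w.length ∧ w.length ≤ n)
    (hno : NonOverlapping 𝒥)
    (Jc : ℕ → ℕ) (hJc : ∀ i : ℕ, Jc i = Nat.card {w : List (Fin q) // w ∈ 𝒥 ∧ w.length = i})
    (b : ℕ → ℕ)
    (hbcard : ∀ j : ℕ, b j = Nat.card {w : List (Fin q) //
      w.length = j ∧ ¬ ∃ c ∈ 𝒥, c <:+: w}) :
    Nat.card {w : List (Fin q) // w.length = m + n ∧
        Nat.card {p : Fin (m + n) // ∃ c ∈ 𝒥, (w.rotate p).take c.length = c} = 1} =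
      ∑ i ∈ Finset.Icc h n, (m + n) * b (m + n - i) * Jc i := by
  classical
  set L := m + n with hLdef
  have hL0 : 0 < L := by omega
  have hlenS : ∀ w ∈ 𝒥, 1 ≤ w.length ∧ w.length < L := by
    intro w hw
    have := hlen w hw
    omega
  -- the sigma type
  let F : ℕ → Type := fun i =>
    Fin L × {c : List (Fin q) // c ∈ 𝒥 ∧ c.length = i} ×
      {v : List (Fin q) // v.length = L - i ∧ ¬ ∃ x ∈ 𝒥, x <:+: v}
  let A := {w : List (Fin q) // w.length = L ∧
      Nat.card {p : Fin L // ∃ c ∈ 𝒥, (w.rotate p).take c.length = c} = 1}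
  -- the forward map
  have hmain : ∀ (i : ℕ), i ∈ Finset.Icc h n → ∀ (x : F i),
      ((x.2.1.1 ++ x.2.2.1).rotate (L - x.1)).length = L ∧
      Nat.card {p : Fin L // ∃ c ∈ 𝒥,
        (((x.2.1.1 ++ x.2.2.1).rotate (L - x.1)).rotate p).take c.length = c} = 1 := by
    intro i hi x
    obtain ⟨p, ⟨c, hcJ, hci⟩, ⟨v, hvl, hvf⟩⟩ := x
    simp only [Finset.mem_Icc] at hi
    have hlcv : c.length + v.length = L := by omega
    constructor
    · simp [hlcv]
    · rw [Nat.card_eq_one_iff_unique]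
      constructor
      · constructor
        intro ⟨p₁, h1⟩ ⟨p₂, h2⟩
        have e1 := (occIff hno hlenS hcJ hvf hlcv p.2 p₁.2).mp h1
        have e2 := (occIff hno hlenS hcJ hvf hlcv p.2 p₂.2).mp h2
        exact Subtype.ext (Fin.ext (e1.trans e2.symm))
      · exact ⟨⟨p, (occIff hno hlenS hcJ hvf hlcv p.2 p.2).mpr rfl⟩⟩
  let f : (Σ i : (Finset.Icc h n : Finset ℕ), F i) → A := fun x =>
    ⟨(x.2.2.1.1 ++ x.2.2.2.1).rotate (L - x.2.1),
      hmain x.1.1 x.1.2 x.2⟩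
  have hbij : Function.Bijective f := by
    constructor
    · -- injectivity
      rintro ⟨⟨i, hi⟩, p, ⟨c, hcJ, hci⟩, ⟨v, hvl, hvf⟩⟩
        ⟨⟨i', hi'⟩, p', ⟨c', hcJ', hci'⟩, ⟨v', hvl', hvf'⟩⟩ hEq
      simp only [Finset.mem_Icc] at hi hi'
      have hw : (c ++ v).rotate (L - ↑p) = (c' ++ v').rotate (L - ↑p') :=
        congrArg Subtype.val hEq
      simp only at hci hci' hvl hvl'
      have hlcv : c.length + v.length = L := by omega
      have hlcv' : c'.length + v'.length = L := by omega
      -- occurrence at p' in the common word, read off from the primed representation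
      have hrr : ((c' ++ v').rotate (L - ↑p')).rotate ↑p' = c' ++ v' := by
        rw [List.rotate_rotate]
        have h2 : L - ↑p' + ↑p' = L := by omega
        rw [h2]
        have hul' : (c' ++ v').length = L := by simp [hlcv']
        rw [← hul', List.rotate_length]
      have hocc' : ∃ c'' ∈ 𝒥,
          ((((c ++ v)).rotate (L - ↑p)).rotate ↑p').take c''.length = c'' := by
        rw [hw, hrr]
        exact ⟨c', hcJ',
          by rw [List.take_append_of_le_length le_rfl, List.take_length]⟩
      have hpp : (↑p' : ℕ) = ↑p :=
        (occIff hno hlenS hcJ hvf hlcv p.2 p'.2).mp hocc'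
      have hpp' : p' = p := Fin.ext hpp
      subst hpp'
      -- now the two appends are equal
      have hcv : c ++ v = c' ++ v' := by
        have h1 := congrArg (fun l => l.rotate (↑p' : ℕ)) hw
        simp only [List.rotate_rotate] at h1
        have h2 : L - ↑p' + ↑p' = L := by omega
        rw [h2] at h1
        have e1 : (c ++ v).rotate L = c ++ v := by
          have hul : (c ++ v).length = L := by simp [hlcv]
          rw [← hul, List.rotate_length]
        have e2 : (c' ++ v').rotate L = c' ++ v' := by
          have hul' : (c' ++ v').length = L := by simp [hlcv']
          rw [← hul', List.rotate_length]
        rw [← e1, ← e2]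
        exact h1
      have hcc : c' = c := by
        apply keyUniq hno hcJ hcJ'
        rw [hcv, List.take_append_of_le_length le_rfl, List.take_length]
      subst hcc
      have hvv : v = v' := List.append_cancel_left hcv
      subst hvv
      have hii : i = i' := by omega
      subst hii
      rfl
    · -- surjectivity
      rintro ⟨w, hwl, hwc⟩
      rw [Nat.card_eq_one_iff_unique] at hwc
      obtain ⟨hsub, ⟨⟨p₀, c, hcJ, hcw⟩⟩⟩ := hwc
      have hiJ := hlen c hcJ
      have hclt : c.length < L := by omega
      set u := w.rotate ↑p₀ with hu
      have hul : u.length = L := by rw [hu, List.length_rotate, hwl]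
      set v := u.drop c.length with hv
      have hvl : v.length = L - c.length := by rw [hv, List.length_drop, hul]
      have huapp : u = c ++ v := by
        conv_lhs => rw [← List.take_append_drop c.length u]
        rw [hcw]
      have hvf : ¬ ∃ x ∈ 𝒥, x <:+: v := by
        rintro ⟨x, hxJ, s₁, t₁, hst⟩
        have hxl := hlenS x hxJ
        have hlens : s₁.length + x.length + t₁.length = v.length := by
          rw [← hst]; simp; omega
        set s := c.length + s₁.length with hs
        have hsxL : s + x.length ≤ L := by omega
        have hs0 : 0 < s := by omega
        have hsL : s < L := by omega
        have hocc1 : ∃ c' ∈ 𝒥, (w.rotate ((↑p₀ + s) % L)).take c'.length = c' := by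
          refine ⟨x, hxJ, ?_⟩
          have e1 : w.rotate ((↑p₀ + s) % L) = u.rotate s := by
            rw [hu, List.rotate_rotate]
            conv_rhs => rw [← List.rotate_mod]
            rw [hwl]
          rw [e1, List.rotate_eq_drop_append_take (by omega),
            List.take_append_of_le_length (by simp [hul]; omega)]
          have e2 : u.drop s = x ++ t₁ := by
            have e3 : u = (c ++ s₁) ++ (x ++ t₁) := by
              rw [huapp, ← hst]; simp
            have e4 : s = (c ++ s₁).length := by simp [hs]
            rw [e3, e4, List.drop_left]
          rw [e2, List.take_append_of_le_length le_rfl, List.take_length]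
        have hmod : (↑p₀ + s) % L < L := Nat.mod_lt _ hL0
        have := hsub.allEq ⟨⟨(↑p₀ + s) % L, hmod⟩, hocc1⟩ ⟨p₀, c, hcJ, hcw⟩
        have hval : (↑p₀ + s) % L = ↑p₀ := by
          have := congrArg (fun z => (z.1 : ℕ)) this
          simpa using this
        exact modAux2 p₀.2 hsL hs0 hval
      have hmem : c.length ∈ Finset.Icc h n := Finset.mem_Icc.mpr ⟨hiJ.1, hiJ.2⟩
      refine ⟨⟨⟨c.length, hmem⟩, p₀, ⟨c, hcJ, rfl⟩, ⟨v, hvl, hvf⟩⟩, ?_⟩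
      apply Subtype.ext
      show (c ++ v).rotate (L - ↑p₀) = w
      rw [← huapp, hu, List.rotate_rotate]
      have : (↑p₀ : ℕ) + (L - ↑p₀) = L := by omega
      rw [this, ← hwl, List.rotate_length]
  -- counting
  have hcard : Nat.card A =
      Nat.card (Σ i : (Finset.Icc h n : Finset ℕ), F i) :=
    (Nat.card_congr (Equiv.ofBijective f hbij)).symm
  have hfin1 : ∀ i : ℕ, Finite {c : List (Fin q) // c ∈ 𝒥 ∧ c.length = i} :=
    fun i => finAux2 (· ∈ 𝒥)
  have hfin2 : ∀ j : ℕ, Finite {v : List (Fin q) //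
      v.length = j ∧ ¬ ∃ x ∈ 𝒥, x <:+: v} :=
    fun j => finAux (fun v => ¬ ∃ x ∈ 𝒥, x <:+: v)
  have hfinF : ∀ i : ℕ, Finite (F i) := by
    intro i
    have := hfin1 i
    have := hfin2 (L - i)
    exact Finite.instProd
  letI : ∀ i : (Finset.Icc h n : Finset ℕ), Fintype (F i) :=
    fun i => @Fintype.ofFinite _ (hfinF i)
  have hcards : Nat.card (Σ i : (Finset.Icc h n : Finset ℕ), F i) =
      ∑ i : (Finset.Icc h n : Finset ℕ), Nat.card (F i) := by
    rw [Nat.card_eq_fintype_card, Fintype.card_sigma]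
    congr 1
    funext i
    rw [Nat.card_eq_fintype_card]
  have hfiber : ∀ i : ℕ, Nat.card (F i) = L * b (L - i) * Jc i := by
    intro i
    have e1 : Nat.card (F i) = Nat.card (Fin L) *
        (Nat.card {c : List (Fin q) // c ∈ 𝒥 ∧ c.length = i} *
          Nat.card {v : List (Fin q) // v.length = L - i ∧ ¬ ∃ x ∈ 𝒥, x <:+: v}) := by
      rw [← Nat.card_prod, ← Nat.card_prod]
    rw [e1, Nat.card_eq_fintype_card, Fintype.card_fin, ← hJc, ← hbcard]
    ring
  rw [hcard, hcards]
  rw [Finset.sum_coe_sort (Finset.Icc h n) (fun i => Nat.card (F i))]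
  exact Finset.sum_congr rfl (fun i _ => hfiber i)
end
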